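/- arXiv:2402.07292 — 5 statements merged into one kernel-verified Lean document; each statement's English description precedes it below -/
import Mathlib

section
/- Let μ be a finite Borel measure on ℂ with compact support, let c ∈ ℂ and ρ > 0, and assume that the support of μ is disjoint from the circle {z ∈ ℂ : |z − c| = ρ}. Then (1/(2πi)) ∮_{|z−c|=ρ} ( ∫_ℂ (z − ζ)⁻¹ dμ(ζ) ) dz = μ({ζ ∈ ℂ : |ζ − c| < ρ}), where ∮_{|z−c|=ρ} denotes the integral over the positively oriented circle of radius ρ centered at c. -/
open MeasureTheory Complex Filter

/-- The Cauchy transform of a compactly supported finite measure, integrated over a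
positively oriented circle disjoint from the support, gives the measure of the open disk. -/
theorem circleIntegral_cauchyTransform (μ : Measure ℂ) [IsFiniteMeasure μ]
    (K : Set ℂ) (hK : IsCompact K) (hμK : μ Kᶜ = 0)
    (c : ℂ) (ρ : ℝ) (hρ : 0 < ρ)
    (hdisj : Disjoint K (Metric.sphere c ρ)) :
    (2 * Real.pi * I)⁻¹ * (∮ z in C(c, ρ), ∫ ζ, (z - ζ)⁻¹ ∂μ) =
      ((μ (Metric.ball c ρ)).toReal : ℂ) := by
  -- a positive separation between `K` and the circle
  obtain ⟨d, hd0, hd⟩ : ∃ d : ℝ, 0 < d ∧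
      ∀ ζ ∈ K, ∀ z ∈ Metric.sphere c ρ, d ≤ dist z ζ := by
    rcases K.eq_empty_or_nonempty with rfl | hne
    · exact ⟨1, one_pos, by simp⟩
    · obtain ⟨ζ₀, hζ₀, hmin⟩ := hK.exists_isMinOn hne
        (Metric.continuous_infDist_pt (Metric.sphere c ρ)).continuousOn
      have hpos : 0 < Metric.infDist ζ₀ (Metric.sphere c ρ) := by
        rw [← (Metric.isClosed_sphere).notMem_iff_infDist_pos
          ⟨c + ρ, by simp [Complex.dist_eq, abs_of_pos hρ]⟩]
        exact fun h => hdisj.ne_of_mem hζ₀ h rfl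
      exact ⟨_, hpos, fun ζ hζ z hz => (hmin hζ).trans
        (by rw [dist_comm]; exact Metric.infDist_le_dist_of_mem hz)⟩
  have hμae : ∀ᵐ ζ ∂μ, ζ ∈ K := by
    rw [ae_iff]; exact hμK
  set ν : Measure ℝ := volume.restrict (Set.Ioc 0 (2 * Real.pi)) with hν
  haveI : IsFiniteMeasure ν := by
    constructor
    rw [hν, Measure.restrict_apply_univ, Real.volume_Ioc]
    exact ENNReal.ofReal_lt_top
  -- Fubini: swap the circle integral and the measure integral
  have key : (∮ z in C(c, ρ), ∫ ζ, (z - ζ)⁻¹ ∂μ)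
      = ∫ ζ, ∫ θ, deriv (circleMap c ρ) θ * (circleMap c ρ θ - ζ)⁻¹ ∂ν ∂μ := by
    rw [circleIntegral, intervalIntegral.integral_of_le Real.two_pi_pos.le, ← hν]
    rw [← MeasureTheory.integral_integral_swap]
    · refine integral_congr_ae (Eventually.of_forall fun θ => ?_)
      simp only [smul_eq_mul, ← integral_const_mul]
    · -- integrability on the product
      apply Integrable.mono' (g := fun _ => ρ * d⁻¹) (integrable_const _)
      · apply Measurable.aestronglyMeasurable
        apply Measurable.mul
        · have : Continuous fun θ : ℝ => deriv (circleMap c ρ) θ := by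
            simp only [deriv_circleMap]
            exact (continuous_circleMap 0 ρ).mul continuous_const
          exact this.measurable.comp measurable_fst
        · exact (((continuous_circleMap c ρ).comp continuous_fst).sub
            continuous_snd).measurable.inv
      · have hsnd : ∀ᵐ p : ℝ × ℂ ∂(ν.prod μ), p.2 ∈ K := by
          rw [ae_iff]
          refine measure_mono_null (t := Set.univ ×ˢ Kᶜ)
            (fun p hp => Set.mem_prod.2 ⟨Set.mem_univ p.1, hp⟩) ?_
          rw [Measure.prod_prod, hμK, mul_zero]
        filter_upwards [hsnd] with p hp
        have h1 : d ≤ dist (circleMap c ρ p.1) p.2 :=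
          hd _ hp _ (circleMap_mem_sphere c hρ.le p.1)
        have h1' : d ≤ ‖circleMap c ρ p.1 - p.2‖ := by
          rwa [Complex.dist_eq] at h1
        rw [Function.uncurry]
        simp only [norm_mul, norm_inv, deriv_circleMap, map_mul,
          norm_circleMap_zero, Complex.norm_I, mul_one, abs_of_pos hρ]
        gcongr
  -- evaluate the inner circle integral: `2πi` inside the disk, `0` outside
  have inner : ∀ᵐ ζ ∂μ, (∫ θ, deriv (circleMap c ρ) θ * (circleMap c ρ θ - ζ)⁻¹ ∂ν)
      = (Metric.ball c ρ).indicator (fun _ => (2 * Real.pi * I : ℂ)) ζ := by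
    filter_upwards [hμae] with ζ hζ
    have hζs : ζ ∉ Metric.sphere c ρ := fun h => hdisj.ne_of_mem hζ h rfl
    have hcirc : (∫ θ, deriv (circleMap c ρ) θ * (circleMap c ρ θ - ζ)⁻¹ ∂ν)
        = ∮ z in C(c, ρ), (z - ζ)⁻¹ := by
      rw [circleIntegral, intervalIntegral.integral_of_le Real.two_pi_pos.le, hν]
      simp only [smul_eq_mul]
    rw [hcirc]
    by_cases hb : ζ ∈ Metric.ball c ρ
    · rw [Set.indicator_of_mem hb, circleIntegral.integral_sub_inv_of_mem_ball hb]
    · rw [Set.indicator_of_notMem hb]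
      have hcb : ζ ∉ Metric.closedBall c ρ := by
        intro h
        rcases (Metric.mem_closedBall.1 h).lt_or_eq with h' | h'
        · exact hb (Metric.mem_ball.2 h')
        · exact hζs (Metric.mem_sphere.2 h')
      have hne : ∀ z ∈ Metric.closedBall c ρ, z - ζ ≠ 0 := fun z hz =>
        sub_ne_zero.2 (fun h => hcb (h ▸ hz))
      exact circleIntegral_eq_zero_of_differentiable_on_off_countable hρ.le Set.countable_empty
        ((continuousOn_id.sub continuousOn_const).inv₀ hne)
        (fun z hz => ((differentiableAt_id.sub_const ζ).inv
          (hne z (Metric.ball_subset_closedBall hz.1))))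
  rw [key, integral_congr_ae inner, integral_indicator_const _ measurableSet_ball]
  rw [real_smul]
  have h2 : (2 * Real.pi * I : ℂ) ≠ 0 := by
    simp [Real.pi_ne_zero, I_ne_zero]
  field_simp
  rfl
end

section
/- With E, H, S as in the context: the function S is holomorphic on ℂ ∖ E (in particular, it extends continuously and analytically across the real gaps between the intervals), S(z)² = H(z) for every z ∈ ℂ ∖ E, and S(z)/z^ℓ → 1 as |z| → ∞. -/
open Complex Filter Set Topology

private lemma sq_cpow_half {w : ℂ} (hw : w ≠ 0) : (w ^ ((1:ℂ)/2)) ^ 2 = w := by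
  rw [sq, ← Complex.cpow_add _ _ hw]
  norm_num

private lemma exp_half_pi_I : Complex.exp ((Real.pi : ℂ) * Complex.I * (1/2)) = Complex.I := by
  have h : (Real.pi : ℂ) * Complex.I * (1/2) = ((Real.pi/2 : ℝ) : ℂ) * Complex.I := by
    push_cast; ring
  rw [h, Complex.exp_mul_I, ← Complex.ofReal_cos, ← Complex.ofReal_sin,
    Real.cos_pi_div_two, Real.sin_pi_div_two]
  simp

private lemma log_flip_pos {c : ℝ} {z : ℂ} (h : 0 < z.im ∨ (z.im = 0 ∧ z.re < c)) :
    Complex.log (z - c) = Complex.log ((c:ℂ) - z) + Real.pi * Complex.I := by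
  have hzc : z - (c:ℂ) = -((c:ℂ) - z) := by ring
  have habs : ‖z - c‖ = ‖(c:ℂ) - z‖ := by
    rw [hzc, norm_neg]
  have harg : Complex.arg (z - c) = Complex.arg ((c:ℂ) - z) + Real.pi := by
    rcases h with h | ⟨h0, hlt⟩
    · have him : ((c:ℂ) - z).im < 0 := by simpa using h
      rw [hzc]
      exact Complex.arg_neg_eq_arg_add_pi_of_im_neg him
    · have h1 : z - (c:ℂ) = (((z.re - c : ℝ)) : ℂ) := by
        apply Complex.ext <;> simp [h0]
      have h2 : (c:ℂ) - z = (((c - z.re : ℝ)) : ℂ) := by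
        apply Complex.ext <;> simp [h0]
      rw [h1, h2, Complex.arg_ofReal_of_neg (by linarith), Complex.arg_ofReal_of_nonneg (by linarith)]
      ring
  apply Complex.ext
  · simp [Complex.log_re, Complex.add_re, habs]
  · simp [Complex.log_im, Complex.add_im, harg]

private lemma cpow_flip_pos {c : ℝ} {z : ℂ} (h : 0 < z.im ∨ (z.im = 0 ∧ z.re < c)) :
    (z - (c:ℂ)) ^ ((1:ℂ)/2) = Complex.I * ((c:ℂ) - z) ^ ((1:ℂ)/2) := by
  have hz1 : z - (c:ℂ) ≠ 0 := by
    intro hzz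
    rw [sub_eq_zero] at hzz
    rcases h with h | ⟨h0, hlt⟩
    · rw [hzz] at h; simp at h
    · rw [hzz] at hlt; simp at hlt
  have hz2 : (c:ℂ) - z ≠ 0 := fun hzz => hz1 (by rw [← neg_sub] at hzz; simpa using neg_eq_zero.mp hzz)
  rw [Complex.cpow_def_of_ne_zero hz1, Complex.cpow_def_of_ne_zero hz2, log_flip_pos h,
    add_mul, Complex.exp_add, exp_half_pi_I, mul_comm]

private lemma log_flip_neg {c : ℝ} {z : ℂ} (h : z.im < 0) :
    Complex.log (z - c) = Complex.log ((c:ℂ) - z) - Real.pi * Complex.I := by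
  have hzc : z - (c:ℂ) = -((c:ℂ) - z) := by ring
  have habs : ‖z - c‖ = ‖(c:ℂ) - z‖ := by
    rw [hzc, norm_neg]
  have harg : Complex.arg (z - c) = Complex.arg ((c:ℂ) - z) - Real.pi := by
    have him : 0 < ((c:ℂ) - z).im := by simpa using h
    rw [hzc]
    exact Complex.arg_neg_eq_arg_sub_pi_of_im_pos him
  apply Complex.ext
  · simp [Complex.log_re, Complex.sub_re, habs]
  · simp [Complex.log_im, Complex.sub_im, harg]

private lemma cpow_flip_neg {c : ℝ} {z : ℂ} (h : z.im < 0) :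
    (z - (c:ℂ)) ^ ((1:ℂ)/2) = -Complex.I * ((c:ℂ) - z) ^ ((1:ℂ)/2) := by
  have hz1 : z - (c:ℂ) ≠ 0 := by
    intro hzz; rw [sub_eq_zero] at hzz; rw [hzz] at h; simp at h
  have hz2 : (c:ℂ) - z ≠ 0 := fun hzz => hz1 (by rw [← neg_sub] at hzz; simpa using neg_eq_zero.mp hzz)
  have hexp : Complex.exp (-((Real.pi:ℂ) * Complex.I) * (1/2)) = -Complex.I := by
    have : -((Real.pi:ℂ) * Complex.I) * (1/2) = -((Real.pi:ℂ) * Complex.I * (1/2)) := by ring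
    rw [this, Complex.exp_neg, exp_half_pi_I, Complex.inv_I]
  rw [Complex.cpow_def_of_ne_zero hz1, Complex.cpow_def_of_ne_zero hz2, log_flip_neg h,
    sub_mul, Complex.exp_sub]
  rw [div_eq_mul_inv, ← Complex.exp_neg, ← hexp]
  ring_nf

private lemma pair_eq {a bb : ℝ} (hab : a < bb) {z : ℂ} (h : z.im ≠ 0 ∨ z.re < a) :
    (z - (a:ℂ)) ^ ((1:ℂ)/2) * (z - (bb:ℂ)) ^ ((1:ℂ)/2)
      = -(((a:ℂ) - z) ^ ((1:ℂ)/2) * ((bb:ℂ) - z) ^ ((1:ℂ)/2)) := by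
  rcases lt_trichotomy z.im 0 with him | him | him
  · rw [cpow_flip_neg (c := a) him, cpow_flip_neg (c := bb) him]
    linear_combination (((a:ℂ) - z) ^ ((1:ℂ)/2) * ((bb:ℂ) - z) ^ ((1:ℂ)/2)) * Complex.I_mul_I
  · have hra : z.re < a := by
      rcases h with h | h
      · exact absurd him h
      · exact h
    rw [cpow_flip_pos (Or.inr ⟨him, hra⟩), cpow_flip_pos (Or.inr ⟨him, lt_trans hra hab⟩)]
    linear_combination (((a:ℂ) - z) ^ ((1:ℂ)/2) * ((bb:ℂ) - z) ^ ((1:ℂ)/2)) * Complex.I_mul_I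
  · rw [cpow_flip_pos (c := a) (Or.inl him), cpow_flip_pos (c := bb) (Or.inl him)]
    linear_combination (((a:ℂ) - z) ^ ((1:ℂ)/2) * ((bb:ℂ) - z) ^ ((1:ℂ)/2)) * Complex.I_mul_I

private lemma pair_diff {a bb : ℝ} (hab : a < bb) {z₀ : ℂ}
    (hz : z₀ ∉ Complex.ofReal '' Set.Icc a bb) :
    DifferentiableAt ℂ (fun z : ℂ => (z - (a:ℂ)) ^ ((1:ℂ)/2) * (z - (bb:ℂ)) ^ ((1:ℂ)/2)) z₀ := by
  by_cases hcase : z₀.im ≠ 0 ∨ bb < z₀.re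
  · have h1 : z₀ - (a:ℂ) ∈ Complex.slitPlane := by
      rw [Complex.mem_slitPlane_iff]
      rcases hcase with h | h
      · right; simpa using h
      · left; simp only [Complex.sub_re, Complex.ofReal_re]; linarith
    have h2 : z₀ - (bb:ℂ) ∈ Complex.slitPlane := by
      rw [Complex.mem_slitPlane_iff]
      rcases hcase with h | h
      · right; simpa using h
      · left; simp only [Complex.sub_re, Complex.ofReal_re]; linarith
    exact ((differentiableAt_id.sub_const _).cpow (differentiableAt_const _) h1).mul
      ((differentiableAt_id.sub_const _).cpow (differentiableAt_const _) h2)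
  · push_neg at hcase
    obtain ⟨him, hre⟩ := hcase
    have hra : z₀.re < a := by
      by_contra hcon
      push_neg at hcon
      exact hz ⟨z₀.re, ⟨hcon, hre⟩, (Complex.ext rfl (by simpa using him.symm))⟩
    have hU : {z : ℂ | z.im ≠ 0 ∨ z.re < a} ∈ 𝓝 z₀ := by
      have : IsOpen {z : ℂ | z.im ≠ 0 ∨ z.re < a} :=
        (isOpen_ne.preimage Complex.continuous_im).union
          (isOpen_Iio.preimage Complex.continuous_re)
      exact this.mem_nhds (Or.inr hra)
    have heq : (fun z : ℂ => (z - (a:ℂ)) ^ ((1:ℂ)/2) * (z - (bb:ℂ)) ^ ((1:ℂ)/2))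
        =ᶠ[𝓝 z₀] fun z : ℂ => -(((a:ℂ) - z) ^ ((1:ℂ)/2) * ((bb:ℂ) - z) ^ ((1:ℂ)/2)) :=
      Filter.eventually_of_mem hU fun z hzU => pair_eq hab hzU
    rw [heq.differentiableAt_iff]
    have h1 : (a:ℂ) - z₀ ∈ Complex.slitPlane := by
      rw [Complex.mem_slitPlane_iff]
      left; simp only [Complex.sub_re, Complex.ofReal_re]; linarith
    have h2 : (bb:ℂ) - z₀ ∈ Complex.slitPlane := by
      rw [Complex.mem_slitPlane_iff]
      left; simp only [Complex.sub_re, Complex.ofReal_re]; linarith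
    exact (((differentiableAt_const _).sub differentiableAt_id).cpow
        (differentiableAt_const _) h1).mul
      ((((differentiableAt_const _).sub differentiableAt_id).cpow
        (differentiableAt_const _) h2)) |>.neg

private lemma reindex (ℓ : ℕ) (f : ℕ → ℂ) :
    ∏ j ∈ Finset.Icc 1 (2*ℓ), f j = ∏ m ∈ Finset.Icc 1 ℓ, (f (2*m-1) * f (2*m)) := by
  have hset : Finset.Icc 1 (2*ℓ) = (Finset.Icc 1 ℓ).biUnion (fun m => {2*m-1, 2*m}) := by
    ext j
    simp only [Finset.mem_Icc, Finset.mem_biUnion, Finset.mem_insert, Finset.mem_singleton]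
    constructor
    · rintro ⟨h1, h2⟩
      exact ⟨(j+1)/2, ⟨by omega, by omega⟩, by omega⟩
    · rintro ⟨m, ⟨hm1, hm2⟩, h | h⟩ <;> omega
  have hdisj : (↑(Finset.Icc 1 ℓ) : Set ℕ).PairwiseDisjoint (fun m => ({2*m-1, 2*m} : Finset ℕ)) := by
    intro x hx y hy hxy
    simp only [Finset.coe_Icc, Set.mem_Icc] at hx hy
    refine Finset.disjoint_left.mpr ?_
    intro a ha hb
    simp only [Finset.mem_insert, Finset.mem_singleton] at ha hb
    omega
  rw [hset, Finset.prod_biUnion hdisj]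
  refine Finset.prod_congr rfl fun m hm => ?_
  simp only [Finset.mem_Icc] at hm
  rw [Finset.prod_pair (by omega)]

private lemma arg_sub_lt {c : ℝ} {z : ℂ} (hz : |c| < ‖z‖) :
    |Complex.arg (z - c) - Complex.arg z| < Real.pi := by
  have hpi := Real.pi_pos
  have himeq : (z - (c:ℂ)).im = z.im := by simp
  rcases lt_trichotomy z.im 0 with him | him | him
  · have h1 : Complex.arg z < 0 := Complex.arg_neg_iff.mpr him
    have h2 : Complex.arg (z - c) < 0 := Complex.arg_neg_iff.mpr (by rw [himeq]; exact him)
    have h3 := Complex.neg_pi_lt_arg z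
    have h4 := Complex.neg_pi_lt_arg (z - c)
    rw [abs_lt]; constructor <;> linarith
  · have hzre : z = ((z.re : ℝ) : ℂ) := by apply Complex.ext <;> simp [him]
    have habs : ‖z‖ = |z.re| := by
      nth_rewrite 1 [hzre]; rw [Complex.norm_real, Real.norm_eq_abs]
    have h1 : z - (c:ℂ) = (((z.re - c : ℝ)) : ℂ) := by
      apply Complex.ext <;> simp [him]
    rcases le_or_gt 0 z.re with hre | hre
    · have : c < z.re := by
        rw [habs, _root_.abs_of_nonneg hre] at hz
        calc c ≤ |c| := le_abs_self c
        _ < z.re := hz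
      rw [h1, Complex.arg_ofReal_of_nonneg (by linarith),
        hzre, Complex.arg_ofReal_of_nonneg hre]
      simpa using hpi
    · have : z.re < c := by
        rw [habs, abs_of_neg hre] at hz
        have : z.re < -|c| := by linarith
        calc z.re < -|c| := this
        _ ≤ c := neg_abs_le c
      rw [h1, Complex.arg_ofReal_of_neg (by linarith), hzre, Complex.arg_ofReal_of_neg hre]
      simpa using hpi
  · have h1 : 0 ≤ Complex.arg z := Complex.arg_nonneg_iff.mpr him.le
    have h2 : 0 ≤ Complex.arg (z - c) := Complex.arg_nonneg_iff.mpr (by rw [himeq]; exact him.le)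
    have h3 : Complex.arg z < Real.pi := by
      refine lt_of_le_of_ne (Complex.arg_le_pi z) fun hcon => ?_
      have := (Complex.arg_eq_pi_iff.mp hcon).2
      linarith
    have h4 : Complex.arg (z - c) < Real.pi := by
      refine lt_of_le_of_ne (Complex.arg_le_pi (z - c)) fun hcon => ?_
      have := (Complex.arg_eq_pi_iff.mp hcon).2
      rw [himeq] at this
      linarith
    rw [abs_lt]; constructor <;> linarith

private lemma re_pos_quot {c : ℝ} {z : ℂ} (hz : |c| < ‖z‖) :
    0 < ((z - (c:ℂ)) ^ ((1:ℂ)/2) / z ^ ((1:ℂ)/2)).re := by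
  have hz0 : z ≠ 0 := by
    intro h; rw [h] at hz; simp at hz; linarith [abs_nonneg c]
  have hzc : z - (c:ℂ) ≠ 0 := by
    intro h
    rw [sub_eq_zero] at h
    rw [h, Complex.norm_real, Real.norm_eq_abs] at hz
    exact lt_irrefl _ hz
  rw [Complex.cpow_def_of_ne_zero hzc, Complex.cpow_def_of_ne_zero hz0, ← Complex.exp_sub,
    ← sub_mul, Complex.exp_re]
  apply mul_pos (Real.exp_pos _)
  apply Real.cos_pos_of_mem_Ioo
  have him : ((Complex.log (z - c) - Complex.log z) * ((1:ℂ)/2)).im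
      = (Complex.arg (z - c) - Complex.arg z) / 2 := by
    have h12 : ((1:ℂ)/2) = (((1/2 : ℝ)) : ℂ) := by norm_num
    rw [h12, Complex.mul_im]
    simp [Complex.log_im]
    ring
  rw [him, Set.mem_Ioo]
  have := arg_sub_lt hz
  rw [abs_lt] at this
  constructor <;> linarith

private lemma factor_tendsto (c : ℝ) :
    Tendsto (fun z : ℂ => (z - (c:ℂ)) ^ ((1:ℂ)/2) / z ^ ((1:ℂ)/2)) (cocompact ℂ) (𝓝 1) := by
  have hnorm : Tendsto (fun z : ℂ => ‖z‖) (cocompact ℂ) atTop := tendsto_norm_cocompact_atTop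
  have hinv : Tendsto (fun z : ℂ => (c:ℂ) / z) (cocompact ℂ) (𝓝 0) := by
    rw [tendsto_zero_iff_norm_tendsto_zero]
    have h1 : Tendsto (fun z : ℂ => ‖(c:ℂ)‖ * ‖z‖⁻¹) (cocompact ℂ) (𝓝 (‖(c:ℂ)‖ * 0)) :=
      (tendsto_inv_atTop_zero.comp hnorm).const_mul _
    rw [mul_zero] at h1
    refine h1.congr fun z => ?_
    rw [norm_div, div_eq_mul_inv]
  have hq : Tendsto (fun z : ℂ => 1 - (c:ℂ)/z) (cocompact ℂ) (𝓝 1) := by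
    simpa using tendsto_const_nhds.sub hinv
  have hu : Tendsto (fun z : ℂ => (1 - (c:ℂ)/z) ^ ((1:ℂ)/2)) (cocompact ℂ) (𝓝 1) := by
    have hcont : ContinuousAt (fun w : ℂ => w ^ ((1:ℂ)/2)) 1 :=
      continuousAt_cpow_const Complex.one_mem_slitPlane
    have := hcont.tendsto.comp hq
    rw [Complex.one_cpow] at this
    exact this
  have hev : (fun z : ℂ => (1 - (c:ℂ)/z) ^ ((1:ℂ)/2))
      =ᶠ[cocompact ℂ] fun z : ℂ => (z - (c:ℂ)) ^ ((1:ℂ)/2) / z ^ ((1:ℂ)/2) := by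
    have h1 : ∀ᶠ z : ℂ in cocompact ℂ, |c| < ‖z‖ := by
      have := hnorm.eventually_gt_atTop |c|
      refine this.mono fun z hz => ?_
      exact hz
    have h2 : ∀ᶠ z : ℂ in cocompact ℂ, 0 < ((1 - (c:ℂ)/z) ^ ((1:ℂ)/2)).re := by
      have hre : Tendsto (fun z : ℂ => ((1 - (c:ℂ)/z) ^ ((1:ℂ)/2)).re) (cocompact ℂ) (𝓝 1) := by
        have := (Complex.continuous_re.tendsto 1).comp hu
        simpa [Function.comp_def] using this
      exact hre.eventually (eventually_gt_nhds one_pos)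
    filter_upwards [h1, h2] with z hz hre
    have hz0 : z ≠ 0 := by
      intro h; rw [h] at hz; simp at hz; linarith [abs_nonneg c]
    have hzc : z - (c:ℂ) ≠ 0 := by
      intro h
      rw [sub_eq_zero] at h
      rw [h, Complex.norm_real, Real.norm_eq_abs] at hz
      exact lt_irrefl _ hz
    have hq0 : 1 - (c:ℂ)/z ≠ 0 := by
      rw [sub_ne_zero]
      intro h
      apply hzc
      rw [eq_div_iff hz0] at h
      rw [← h]
      ring
    set u := (1 - (c:ℂ)/z) ^ ((1:ℂ)/2) with hu_def
    set w := (z - (c:ℂ)) ^ ((1:ℂ)/2) / z ^ ((1:ℂ)/2) with hw_def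
    have hsq : w ^ 2 = u ^ 2 := by
      rw [hw_def, hu_def, div_pow, sq_cpow_half hzc, sq_cpow_half hz0, sq_cpow_half hq0]
      field_simp
    have hwre : 0 < w.re := re_pos_quot hz
    have hfac : (w - u) * (w + u) = 0 := by linear_combination hsq
    rcases mul_eq_zero.mp hfac with h | h
    · rw [sub_eq_zero] at h; exact h.symm
    · exfalso
      have : w = -u := by linear_combination h
      rw [this] at hwre
      simp only [Complex.neg_re] at hwre
      linarith
  exact hu.congr' hev

/-- The branch `S` of `√H` given by the product of principal square roots is holomorphic
on the complement of `E`, squares to `H` there, and behaves like `z^ℓ` at infinity. -/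
theorem sqrtH_branch (ℓ : ℕ) (hℓ : 1 ≤ ℓ) (b : ℕ → ℝ)
    (hb : ∀ i, 1 ≤ i → i < 2 * ℓ → b i < b (i + 1))
    (E : Set ℂ)
    (hE : E = ⋃ j ∈ Finset.Icc 1 ℓ, Complex.ofReal '' Set.Icc (b (2 * j - 1)) (b (2 * j)))
    (H S : ℂ → ℂ)
    (hH : ∀ z, H z = ∏ j ∈ Finset.Icc 1 (2 * ℓ), (z - (b j : ℂ)))
    (hS : ∀ z, S z = ∏ j ∈ Finset.Icc 1 (2 * ℓ), (z - (b j : ℂ)) ^ ((1 : ℂ) / 2)) :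
    DifferentiableOn ℂ S Eᶜ ∧ (∀ z ∈ Eᶜ, S z ^ 2 = H z) ∧
      Tendsto (fun z => S z / z ^ ℓ) (cocompact ℂ) (nhds 1) := by
  have hbb : ∀ m, 1 ≤ m → m ≤ ℓ → b (2*m-1) < b (2*m) := by
    intro m h1 h2
    have h := hb (2*m-1) (by omega) (by omega)
    have h3 : 2*m-1+1 = 2*m := by omega
    rwa [h3] at h
  have hsub : ∀ m, 1 ≤ m → m ≤ ℓ →
      (Complex.ofReal '' Set.Icc (b (2*m-1)) (b (2*m))) ⊆ E := by
    intro m h1 h2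
    rw [hE]
    intro x hx
    exact Set.mem_iUnion₂.mpr ⟨m, Finset.mem_Icc.mpr ⟨h1, h2⟩, hx⟩
  have hbE : ∀ j, 1 ≤ j → j ≤ 2*ℓ → ((b j : ℝ) : ℂ) ∈ E := by
    intro j h1 h2
    obtain ⟨m, hm1, hm2, hj⟩ : ∃ m, 1 ≤ m ∧ m ≤ ℓ ∧ (j = 2*m-1 ∨ j = 2*m) :=
      ⟨(j+1)/2, by omega, by omega, by omega⟩
    apply hsub m hm1 hm2
    refine ⟨b j, ?_, rfl⟩
    have hlt := hbb m hm1 hm2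
    rcases hj with h | h
    · rw [h]; exact Set.mem_Icc.mpr ⟨le_refl _, hlt.le⟩
    · rw [h]; exact Set.mem_Icc.mpr ⟨hlt.le, le_refl _⟩
  refine ⟨?_, ?_, ?_⟩
  · intro z hz
    have hfun : S = fun w : ℂ => ∏ m ∈ Finset.Icc 1 ℓ,
        ((w - (b (2*m-1) : ℂ)) ^ ((1:ℂ)/2) * (w - (b (2*m) : ℂ)) ^ ((1:ℂ)/2)) := by
      funext w
      rw [hS w, reindex]
    rw [hfun]
    apply DifferentiableAt.differentiableWithinAt
    apply DifferentiableAt.fun_finsetProd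
    intro m hm
    rw [Finset.mem_Icc] at hm
    apply pair_diff (hbb m hm.1 hm.2)
    intro hmem
    exact hz (hsub m hm.1 hm.2 hmem)
  · intro z hz
    rw [hS, hH, ← Finset.prod_pow]
    refine Finset.prod_congr rfl fun j hj => ?_
    rw [Finset.mem_Icc] at hj
    apply sq_cpow_half
    rw [sub_ne_zero]
    intro h
    exact hz (by rw [h]; exact hbE j hj.1 hj.2)
  · have hprod : Tendsto (fun z : ℂ => ∏ j ∈ Finset.Icc 1 (2*ℓ),
        ((z - (b j : ℂ)) ^ ((1:ℂ)/2) / z ^ ((1:ℂ)/2))) (cocompact ℂ) (𝓝 1) := by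
      have h := tendsto_finset_prod (Finset.Icc 1 (2*ℓ))
        (f := fun (j : ℕ) (z : ℂ) => (z - (b j : ℂ)) ^ ((1:ℂ)/2) / z ^ ((1:ℂ)/2))
        (a := fun _ => 1) (fun j _ => factor_tendsto (b j))
      simpa using h
    refine hprod.congr' ?_
    have h1 : ∀ᶠ z : ℂ in cocompact ℂ, z ≠ 0 := by
      have h := (tendsto_norm_cocompact_atTop (E := ℂ)).eventually_gt_atTop 0
      refine h.mono fun z hz => ?_
      intro h0
      rw [h0] at hz
      simp at hz
    refine h1.mono fun z hz0 => ?_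
    show (∏ j ∈ Finset.Icc 1 (2*ℓ), (z - (b j : ℂ)) ^ ((1:ℂ)/2) / z ^ ((1:ℂ)/2))
      = S z / z ^ ℓ
    rw [Finset.prod_div_distrib, Finset.prod_const, Nat.card_Icc, hS]
    congr 1
    have h2 : 2*ℓ + 1 - 1 = 2*ℓ := by omega
    rw [h2, pow_mul, sq_cpow_half hz0]
end

section
/- With E and H as in the context: there exists a unique monic polynomial R of degree ℓ−1 with real coefficients such that for every j = 1, …, ℓ−1 the function x ↦ R(x)/√(H(x)) is Lebesgue integrable on the open gap (b_{2j}, b_{2j+1}) and ∫_{b_{2j}}^{b_{2j+1}} R(x)/√(H(x)) dx = 0, where √(H(x)) denotes the positive real square root (note H(x) > 0 on each gap). -/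
open MeasureTheory Set Polynomial

namespace ExUR

noncomputable def Hf (ℓ : ℕ) (b : ℕ → ℝ) (x : ℝ) : ℝ :=
  ∏ i ∈ Finset.Icc 1 (2 * ℓ), (x - b i)

noncomputable def Gf (ℓ : ℕ) (b : ℕ → ℝ) (j : ℕ) (x : ℝ) : ℝ :=
  (∏ i ∈ Finset.Ioc 0 (2 * j - 1), (x - b i)) *
    ∏ i ∈ Finset.Ioc (2 * j + 1) (2 * ℓ), (b i - x)

noncomputable def Ig (ℓ : ℕ) (b : ℕ → ℝ) (j : ℕ) (P : Polynomial ℝ) : ℝ :=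
  ∫ x in Ioo (b (2 * j)) (b (2 * j + 1)), P.eval x / Real.sqrt (Hf ℓ b x)

variable {ℓ : ℕ} {b : ℕ → ℝ}
lemma b_lt (hb : ∀ i, 1 ≤ i → i < 2 * ℓ → b i < b (i + 1)) :
    ∀ i k, 1 ≤ i → i < k → k ≤ 2 * ℓ → b i < b k := by
  intro i k h1 hik hk
  induction k, hik using Nat.le_induction with
  | base => exact hb i h1 (by omega)
  | succ k hk' ih => exact (ih (by omega)).trans (hb k (by omega) (by omega))

lemma prod_neg' (s : Finset ℕ) (g : ℕ → ℝ) :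
    (∏ i ∈ s, -g i) = (-1) ^ s.card * ∏ i ∈ s, g i := by
  have : (∏ i ∈ s, -g i) = ∏ i ∈ s, ((-1) * g i) := by
    refine Finset.prod_congr rfl fun i _ => by ring
  rw [this, Finset.prod_mul_distrib, Finset.prod_const]

lemma Hf_eq (hℓ : 1 ≤ ℓ) {j : ℕ} (h1 : 1 ≤ j) (h2 : j ≤ ℓ - 1) (x : ℝ) :
    Hf ℓ b x = (x - b (2 * j)) * (b (2 * j + 1) - x) * Gf ℓ b j x := by
  have hℓ2 : 2 ≤ ℓ := by omega
  have e0 : Finset.Icc 1 (2 * ℓ) = Finset.Ioc 0 (2 * ℓ) := by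
    rw [← Finset.Icc_add_one_left_eq_Ioc]; rfl
  have e1 : (∏ i ∈ Finset.Ioc 0 (2 * ℓ), (x - b i)) =
      (∏ i ∈ Finset.Ioc 0 (2 * j - 1), (x - b i)) *
        ∏ i ∈ Finset.Ioc (2 * j - 1) (2 * ℓ), (x - b i) := by
    rw [Finset.prod_Ioc_consecutive _ (by omega) (by omega)]
  have e2 : (∏ i ∈ Finset.Ioc (2 * j - 1) (2 * ℓ), (x - b i)) =
      (∏ i ∈ Finset.Ioc (2 * j - 1) (2 * j + 1), (x - b i)) *
        ∏ i ∈ Finset.Ioc (2 * j + 1) (2 * ℓ), (x - b i) := by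
    rw [Finset.prod_Ioc_consecutive _ (by omega) (by omega)]
  have e3 : (∏ i ∈ Finset.Ioc (2 * j - 1) (2 * j + 1), (x - b i)) =
      (x - b (2 * j)) * (x - b (2 * j + 1)) := by
    have h2j : 2 * j - 1 + 1 = 2 * j := by omega
    rw [Finset.prod_Ioc_succ_top (by omega), ← h2j, Finset.prod_Ioc_succ_top (by omega)]
    simp
  have e4 : (∏ i ∈ Finset.Ioc (2 * j + 1) (2 * ℓ), (x - b i)) =
      (-1) ^ (Finset.Ioc (2 * j + 1) (2 * ℓ)).card *
        ∏ i ∈ Finset.Ioc (2 * j + 1) (2 * ℓ), (b i - x) := by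
    rw [← prod_neg']
    exact Finset.prod_congr rfl fun i _ => by ring
  have hcard : (Finset.Ioc (2 * j + 1) (2 * ℓ)).card = 2 * ℓ - (2 * j + 1) := by
    simp [Nat.card_Ioc]
  have hodd : Odd (2 * ℓ - (2 * j + 1)) := ⟨ℓ - j - 1, by omega⟩
  have e5 : ((-1 : ℝ)) ^ (Finset.Ioc (2 * j + 1) (2 * ℓ)).card = -1 := by
    rw [hcard, hodd.neg_one_pow]
  rw [Hf, e0, e1, e2, e3, e4, e5, Gf]
  ring

lemma Gf_pos (hℓ : 1 ≤ ℓ) (hb : ∀ i, 1 ≤ i → i < 2 * ℓ → b i < b (i + 1))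
    {j : ℕ} (h1 : 1 ≤ j) (h2 : j ≤ ℓ - 1) {x : ℝ}
    (hx : x ∈ Icc (b (2 * j)) (b (2 * j + 1))) : 0 < Gf ℓ b j x := by
  have hA : 0 < ∏ i ∈ Finset.Ioc 0 (2 * j - 1), (x - b i) := by
    refine Finset.prod_pos fun i hi => ?_
    rw [Finset.mem_Ioc] at hi
    have : b i < b (2 * j) := b_lt hb i (2 * j) (by omega) (by omega) (by omega)
    have := hx.1
    linarith
  have hB : 0 < ∏ i ∈ Finset.Ioc (2 * j + 1) (2 * ℓ), (b i - x) := by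
    refine Finset.prod_pos fun i hi => ?_
    rw [Finset.mem_Ioc] at hi
    have : b (2 * j + 1) < b i := b_lt hb (2 * j + 1) i (by omega) (by omega) (by omega)
    have := hx.2
    linarith
  exact mul_pos hA hB

lemma Gf_cont (j : ℕ) : Continuous (Gf ℓ b j) := by
  unfold Gf
  exact Continuous.mul
    (continuous_finset_prod _ fun i _ => by continuity)
    (continuous_finset_prod _ fun i _ => by continuity)

lemma Hf_pos (hℓ : 1 ≤ ℓ) (hb : ∀ i, 1 ≤ i → i < 2 * ℓ → b i < b (i + 1))
    {j : ℕ} (h1 : 1 ≤ j) (h2 : j ≤ ℓ - 1) {x : ℝ}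
    (hx : x ∈ Ioo (b (2 * j)) (b (2 * j + 1))) : 0 < Hf ℓ b x := by
  rw [Hf_eq hℓ h1 h2]
  have := Gf_pos hℓ hb h1 h2 (Ioo_subset_Icc_self hx)
  exact mul_pos (mul_pos (by linarith [hx.1]) (by linarith [hx.2])) this

lemma Hf_cont : Continuous (Hf ℓ b) := by
  unfold Hf; exact continuous_finset_prod _ fun i _ => by continuity

lemma integrableOn_gap (hℓ : 1 ≤ ℓ) (hb : ∀ i, 1 ≤ i → i < 2 * ℓ → b i < b (i + 1))
    (P : Polynomial ℝ) {j : ℕ} (h1 : 1 ≤ j) (h2 : j ≤ ℓ - 1) :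
    IntegrableOn (fun x => P.eval x / Real.sqrt (Hf ℓ b x))
      (Ioo (b (2 * j)) (b (2 * j + 1))) := by
  set α := b (2 * j) with hα
  set β := b (2 * j + 1) with hβ
  have hαβ : α < β := b_lt hb _ _ (by omega) (by omega) (by omega)
  obtain ⟨x₀, hx₀, hmin⟩ := isCompact_Icc.exists_isMinOn (nonempty_Icc.2 hαβ.le)
    ((Gf_cont (b := b) j).continuousOn)
  set c := Gf ℓ b j x₀ with hc
  have hcpos : 0 < c := Gf_pos hℓ hb h1 h2 hx₀
  have hcle : ∀ x ∈ Icc α β, c ≤ Gf ℓ b j x := fun x hx => hmin hx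
  obtain ⟨M, hM⟩ := isCompact_Icc.exists_bound_of_continuousOn (s := Icc α β)
    (P.continuous.continuousOn)
  set M' := max M 0 with hM'
  have hM'0 : 0 ≤ M' := le_max_right _ _
  have hMle : ∀ x ∈ Icc α β, |P.eval x| ≤ M' := by
    intro x hx
    calc |P.eval x| = ‖P.eval x‖ := rfl
      _ ≤ M := by simpa using hM x hx
      _ ≤ M' := le_max_left _ _
  set D := Real.sqrt ((β - α) / 2) with hD
  have hDpos : 0 < D := Real.sqrt_pos.2 (by linarith)
  set C := (M' / Real.sqrt c) * D⁻¹ with hC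
  have hCnn : 0 ≤ C := by positivity
  have i1 : IntervalIntegrable (fun x => (x - α) ^ (-(1/2) : ℝ)) volume α β := by
    have := (intervalIntegral.intervalIntegrable_rpow' (r := -(1/2))
      (by norm_num) (a := 0) (b := β - α)).comp_sub_right α
    simpa using this
  have i2 : IntervalIntegrable (fun x => (β - x) ^ (-(1/2) : ℝ)) volume α β := by
    have := (intervalIntegral.intervalIntegrable_rpow' (r := -(1/2))
      (by norm_num) (a := 0) (b := β - α)).comp_sub_left β
    simpa using this.symm
  have ig : IntegrableOn
      (fun x => C * (x - α) ^ (-(1/2) : ℝ) + C * (β - x) ^ (-(1/2) : ℝ)) (Ioo α β) := by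
    rw [← intervalIntegrable_iff_integrableOn_Ioo_of_le hαβ.le]
    exact (i1.const_mul C).add (i2.const_mul C)
  have hmeas : AEStronglyMeasurable (fun x => P.eval x / Real.sqrt (Hf ℓ b x))
      (volume.restrict (Ioo α β)) := by
    refine ContinuousOn.aestronglyMeasurable ?_ measurableSet_Ioo
    exact ContinuousOn.div (P.continuous.continuousOn)
      ((Real.continuous_sqrt.comp Hf_cont).continuousOn)
      (fun x hx => (Real.sqrt_pos.2 (Hf_pos hℓ hb h1 h2 hx)).ne')
  refine Integrable.mono' ig hmeas ?_
  rw [ae_restrict_iff' measurableSet_Ioo]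
  filter_upwards with x hx
  obtain ⟨hxα, hxβ⟩ := hx
  set u := x - α with hu
  set v := β - x with hv
  have hupos : 0 < u := by simp [hu]; linarith
  have hvpos : 0 < v := by simp [hv]; linarith
  set su := Real.sqrt u with hsu
  set sv := Real.sqrt v with hsv
  set sg := Real.sqrt (Gf ℓ b j x) with hsg
  set sc := Real.sqrt c with hsc
  have hx' : x ∈ Icc α β := ⟨hxα.le, hxβ.le⟩
  have hgpos : 0 < Gf ℓ b j x := Gf_pos hℓ hb h1 h2 hx'
  have hsupos : 0 < su := Real.sqrt_pos.2 hupos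
  have hsvpos : 0 < sv := Real.sqrt_pos.2 hvpos
  have hsgpos : 0 < sg := Real.sqrt_pos.2 hgpos
  have hscpos : 0 < sc := Real.sqrt_pos.2 hcpos
  have hscsg : sc ≤ sg := Real.sqrt_le_sqrt (hcle x hx')
  have hsqrtH : Real.sqrt (Hf ℓ b x) = su * sv * sg := by
    rw [Hf_eq hℓ h1 h2, Real.sqrt_mul (by nlinarith) , Real.sqrt_mul hupos.le]
  have hnorm : ‖P.eval x / Real.sqrt (Hf ℓ b x)‖ = |P.eval x| / (su * sv * sg) := by
    have habs : |su * sv * sg| = su * sv * sg := abs_of_pos (by positivity)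
    rw [Real.norm_eq_abs, abs_div, hsqrtH, habs]
  have hrw_u : u ^ (-(1/2) : ℝ) = su⁻¹ := by
    rw [Real.rpow_neg hupos.le, hsu, Real.sqrt_eq_rpow]
  have hrw_v : v ^ (-(1/2) : ℝ) = sv⁻¹ := by
    rw [Real.rpow_neg hvpos.le, hsv, Real.sqrt_eq_rpow]
  rw [hnorm, hrw_u, hrw_v]
  have step1 : |P.eval x| / (su * sv * sg) ≤ M' / (su * sv * sc) := by
    refine div_le_div₀ hM'0 (hMle x hx') (by positivity) ?_
    exact mul_le_mul_of_nonneg_left hscsg (by positivity)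
  have step2 : M' / (su * sv * sc) ≤ C * su⁻¹ + C * sv⁻¹ := by
    rcases le_total u v with huv | huv
    · have hvhalf : (β - α) / 2 ≤ v := by simp only [hu, hv] at huv ⊢; linarith
      have hDsv : D ≤ sv := by rw [hD, hsv]; exact Real.sqrt_le_sqrt hvhalf
      have e : M' / (su * sv * sc) = (M' / sc) * sv⁻¹ * su⁻¹ := by
        rw [div_eq_mul_inv, div_eq_mul_inv, mul_inv, mul_inv]; ring
      have : (M' / sc) * sv⁻¹ * su⁻¹ ≤ (M' / sc) * D⁻¹ * su⁻¹ :=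
        mul_le_mul_of_nonneg_right
          (mul_le_mul_of_nonneg_left (inv_anti₀ hDpos hDsv) (by positivity))
          (by positivity)
      calc M' / (su * sv * sc) = (M' / sc) * sv⁻¹ * su⁻¹ := e
        _ ≤ (M' / sc) * D⁻¹ * su⁻¹ := this
        _ = C * su⁻¹ := by rw [hC]
        _ ≤ C * su⁻¹ + C * sv⁻¹ := le_add_of_nonneg_right (by positivity)
    · have huhalf : (β - α) / 2 ≤ u := by simp only [hu, hv] at huv ⊢; linarith
      have hDsu : D ≤ su := by rw [hD, hsu]; exact Real.sqrt_le_sqrt huhalf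
      have e : M' / (su * sv * sc) = (M' / sc) * su⁻¹ * sv⁻¹ := by
        rw [div_eq_mul_inv, div_eq_mul_inv, mul_inv, mul_inv]; ring
      have h' : (M' / sc) * su⁻¹ * sv⁻¹ ≤ (M' / sc) * D⁻¹ * sv⁻¹ :=
        mul_le_mul_of_nonneg_right
          (mul_le_mul_of_nonneg_left (inv_anti₀ hDpos hDsu) (by positivity))
          (by positivity)
      calc M' / (su * sv * sc) = (M' / sc) * su⁻¹ * sv⁻¹ := e
        _ ≤ (M' / sc) * D⁻¹ * sv⁻¹ := h'
        _ = C * sv⁻¹ := by rw [hC]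
        _ ≤ C * su⁻¹ + C * sv⁻¹ := le_add_of_nonneg_left (by positivity)
  exact step1.trans step2

lemma Ig_eq_intervalIntegral (hb : ∀ i, 1 ≤ i → i < 2 * ℓ → b i < b (i + 1))
    {j : ℕ} (h1 : 1 ≤ j) (h2 : j ≤ ℓ - 1) (P : Polynomial ℝ) :
    (∫ x in (b (2 * j))..(b (2 * j + 1)), P.eval x / Real.sqrt (Hf ℓ b x)) = Ig ℓ b j P := by
  have hαβ : b (2 * j) < b (2 * j + 1) := b_lt hb _ _ (by omega) (by omega) (by omega)
  rw [intervalIntegral.integral_of_le hαβ.le, integral_Ioc_eq_integral_Ioo, Ig]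

lemma Ig_add (hℓ : 1 ≤ ℓ) (hb : ∀ i, 1 ≤ i → i < 2 * ℓ → b i < b (i + 1))
    {j : ℕ} (h1 : 1 ≤ j) (h2 : j ≤ ℓ - 1) (P Q : Polynomial ℝ) :
    Ig ℓ b j (P + Q) = Ig ℓ b j P + Ig ℓ b j Q := by
  unfold Ig
  rw [← integral_add (integrableOn_gap hℓ hb P h1 h2) (integrableOn_gap hℓ hb Q h1 h2)]
  congr 1; funext x; rw [eval_add, add_div]

lemma Ig_sub (hℓ : 1 ≤ ℓ) (hb : ∀ i, 1 ≤ i → i < 2 * ℓ → b i < b (i + 1))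
    {j : ℕ} (h1 : 1 ≤ j) (h2 : j ≤ ℓ - 1) (P Q : Polynomial ℝ) :
    Ig ℓ b j (P - Q) = Ig ℓ b j P - Ig ℓ b j Q := by
  unfold Ig
  rw [← integral_sub (integrableOn_gap hℓ hb P h1 h2) (integrableOn_gap hℓ hb Q h1 h2)]
  congr 1; funext x; rw [eval_sub, sub_div]

lemma Ig_smul (c : ℝ) (P : Polynomial ℝ) {j : ℕ} :
    Ig ℓ b j (c • P) = c * Ig ℓ b j P := by
  unfold Ig
  have : (fun x => eval x (c • P) / Real.sqrt (Hf ℓ b x)) =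
      fun x => c • (eval x P / Real.sqrt (Hf ℓ b x)) := by
    funext x; rw [eval_smul, smul_eq_mul, smul_eq_mul, mul_div_assoc]
  rw [this, integral_smul, smul_eq_mul]

lemma eq_zero_of_integrals (hℓ : 1 ≤ ℓ) (hb : ∀ i, 1 ≤ i → i < 2 * ℓ → b i < b (i + 1))
    (P : Polynomial ℝ) (hdeg : P.degree < (ℓ - 1 : ℕ))
    (hint : ∀ j, 1 ≤ j → j ≤ ℓ - 1 → Ig ℓ b j P = 0) : P = 0 := by
  by_contra hP
  set m := ℓ - 1 with hm
  have hnd : P.natDegree < m := (Polynomial.natDegree_lt_iff_degree_lt hP).2 hdeg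
  have key : ∀ j, 1 ≤ j → j ≤ m → ∃ x, x ∈ Ioo (b (2 * j)) (b (2 * j + 1)) ∧ P.eval x = 0 := by
    intro j hj1 hj2
    by_contra hno
    push_neg at hno
    set α := b (2 * j) with hα
    set β := b (2 * j + 1) with hβ
    have hαβ : α < β := b_lt hb _ _ (by omega) (by omega) (by omega)
    have hii : IntervalIntegrable (fun x => P.eval x / Real.sqrt (Hf ℓ b x)) volume α β :=
      (intervalIntegrable_iff_integrableOn_Ioo_of_le hαβ.le).2 (integrableOn_gap hℓ hb P hj1 hj2)
    have hI0 : (∫ x in α..β, P.eval x / Real.sqrt (Hf ℓ b x)) = 0 := by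
      rw [Ig_eq_intervalIntegral hb hj1 hj2]; exact hint j hj1 hj2
    have hx₀ : (α + β) / 2 ∈ Ioo α β := ⟨by linarith, by linarith⟩
    set x₀ := (α + β) / 2 with hx₀def
    have hsqrt : ∀ x ∈ Ioo α β, 0 < Real.sqrt (Hf ℓ b x) := fun x hx =>
      Real.sqrt_pos.2 (Hf_pos hℓ hb hj1 hj2 hx)
    have hIVT : ∀ y ∈ Ioo α β, ∀ z ∈ Ioo α β, P.eval y < 0 → 0 < P.eval z → False := by
      intro y hy z hz hyneg hzpos
      have hsub : uIcc y z ⊆ Ioo α β := (ordConnected_Ioo).uIcc_subset hy hz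
      have h0 : (0 : ℝ) ∈ uIcc (P.eval y) (P.eval z) := by
        rw [Set.mem_uIcc]; left; exact ⟨hyneg.le, hzpos.le⟩
      obtain ⟨w, hw, hw0⟩ := intermediate_value_uIcc (P.continuousOn) h0
      exact hno w (hsub hw) hw0
    rcases Ne.lt_or_gt (hno x₀ hx₀) with hneg | hpos
    · have hall : ∀ x ∈ Ioo α β, P.eval x < 0 := by
        intro y hy
        rcases Ne.lt_or_gt (hno y hy) with h | h
        · exact h
        · exact absurd (hIVT x₀ hx₀ y hy hneg h) (by simp)
      have hpos' : 0 < ∫ x in α..β, -(P.eval x / Real.sqrt (Hf ℓ b x)) := by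
        refine intervalIntegral.intervalIntegral_pos_of_pos_on hii.neg (fun x hx => ?_) hαβ
        exact neg_pos.2 (div_neg_of_neg_of_pos (hall x hx) (hsqrt x hx))
      rw [intervalIntegral.integral_neg, hI0] at hpos'
      simp at hpos'
    · have hall : ∀ x ∈ Ioo α β, 0 < P.eval x := by
        intro y hy
        rcases Ne.lt_or_gt (hno y hy) with h | h
        · exact absurd (hIVT y hy x₀ hx₀ h hpos) (by simp)
        · exact h
      have hpos' : 0 < ∫ x in α..β, P.eval x / Real.sqrt (Hf ℓ b x) := by
        refine intervalIntegral.intervalIntegral_pos_of_pos_on hii (fun x hx => ?_) hαβ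
        exact div_pos (hall x hx) (hsqrt x hx)
      rw [hI0] at hpos'
      simp at hpos'
  choose! r hr1 hr2 using key
  have hinj : Set.InjOn r (Finset.Icc 1 m : Finset ℕ) := by
    have hmono : ∀ j k, 1 ≤ j → j < k → k ≤ m → r j < r k := by
      intro j k hj hjk hk
      have h1 : r j < b (2 * j + 1) := (hr1 j hj (by omega)).2
      have h2 : b (2 * k) < r k := (hr1 k (by omega) hk).1
      have h3 : b (2 * j + 1) < b (2 * k) := b_lt hb _ _ (by omega) (by omega) (by omega)
      linarith
    intro j hj k hk hjk
    simp only [Finset.coe_Icc, Set.mem_Icc] at hj hk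
    rcases lt_trichotomy j k with h | h | h
    · exact absurd hjk (hmono j k hj.1 h hk.2).ne
    · exact h
    · exact absurd hjk.symm (hmono k j hk.1 h hj.2).ne
  have hsub : (Finset.Icc 1 m).image r ⊆ P.roots.toFinset := by
    intro y hy
    rw [Finset.mem_image] at hy
    obtain ⟨j, hj, rfl⟩ := hy
    rw [Finset.mem_Icc] at hj
    rw [Multiset.mem_toFinset, Polynomial.mem_roots']
    exact ⟨hP, hr2 j hj.1 hj.2⟩
  have hcard : ((Finset.Icc 1 m).image r).card = m := by
    rw [Finset.card_image_of_injOn hinj, Nat.card_Icc]; omega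
  have : m ≤ P.natDegree := by
    calc m = ((Finset.Icc 1 m).image r).card := hcard.symm
      _ ≤ P.roots.toFinset.card := Finset.card_le_card hsub
      _ ≤ Multiset.card P.roots := Multiset.toFinset_card_le _
      _ ≤ P.natDegree := Polynomial.card_roots' P
  omega

theorem main (ℓ : ℕ) (hℓ : 1 ≤ ℓ) (b : ℕ → ℝ)
    (hb : ∀ i, 1 ≤ i → i < 2 * ℓ → b i < b (i + 1)) :
    ∃! R : Polynomial ℝ, R.Monic ∧ R.natDegree = ℓ - 1 ∧
      ∀ j, 1 ≤ j → j ≤ ℓ - 1 →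
        IntegrableOn
          (fun x => R.eval x / Real.sqrt (∏ i ∈ Finset.Icc 1 (2 * ℓ), (x - b i)))
          (Set.Ioo (b (2 * j)) (b (2 * j + 1))) ∧
        ∫ x in (b (2 * j))..(b (2 * j + 1)),
          R.eval x / Real.sqrt (∏ i ∈ Finset.Icc 1 (2 * ℓ), (x - b i)) = 0 := by
  set m := ℓ - 1 with hm
  -- the linear map of gap integrals
  set φ : Polynomial ℝ →ₗ[ℝ] (Fin m → ℝ) :=
    { toFun := fun P j => Ig ℓ b (j.1 + 1) P
      map_add' := fun P Q => by
        funext j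
        exact Ig_add hℓ hb (by omega) (by omega : j.1 + 1 ≤ ℓ - 1) P Q
      map_smul' := fun c P => by
        funext j
        simpa using Ig_smul (b := b) (ℓ := ℓ) c P (j := j.1 + 1) } with hφ
  set ψ : (Fin m → ℝ) →ₗ[ℝ] (Fin m → ℝ) :=
    φ ∘ₗ (Polynomial.degreeLT ℝ m).subtype ∘ₗ
      (Polynomial.degreeLTEquiv ℝ m).symm.toLinearMap with hψ
  have hψP : ∀ v, ψ v = φ ((Polynomial.degreeLTEquiv ℝ m).symm v : Polynomial ℝ) :=
    fun v => rfl
  have hinj : Function.Injective ψ := by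
    rw [← LinearMap.ker_eq_bot, LinearMap.ker_eq_bot']
    intro v hv
    set P : Polynomial ℝ := ((Polynomial.degreeLTEquiv ℝ m).symm v : Polynomial ℝ) with hP
    have hPdeg : P.degree < (m : ℕ) :=
      Polynomial.mem_degreeLT.1 ((Polynomial.degreeLTEquiv ℝ m).symm v).2
    have hPint : ∀ j, 1 ≤ j → j ≤ ℓ - 1 → Ig ℓ b j P = 0 := by
      intro j hj1 hj2
      have hv2 : φ P = 0 := by rw [hP, ← hψP]; exact hv
      have := congrFun hv2 ⟨j - 1, by omega⟩
      simpa [hφ, LinearMap.coe_mk, AddHom.coe_mk, show j - 1 + 1 = j by omega] using this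
    have : P = 0 := eq_zero_of_integrals hℓ hb P hPdeg hPint
    have : (Polynomial.degreeLTEquiv ℝ m).symm v = 0 := by
      exact Subtype.ext (by simpa [hP] using this)
    simpa using congrArg (Polynomial.degreeLTEquiv ℝ m) this
  have hsurj : Function.Surjective ψ := LinearMap.injective_iff_surjective.1 hinj
  obtain ⟨v, hv⟩ := hsurj (-(φ ((X : Polynomial ℝ) ^ m)))
  set P : Polynomial ℝ := ((Polynomial.degreeLTEquiv ℝ m).symm v : Polynomial ℝ) with hP
  have hPdeg : P.degree < (m : ℕ) :=
    Polynomial.mem_degreeLT.1 ((Polynomial.degreeLTEquiv ℝ m).symm v).2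
  set R : Polynomial ℝ := X ^ m + P with hR
  have hdegXP : P.degree < ((X : Polynomial ℝ) ^ m).degree := by
    rw [degree_X_pow]; exact hPdeg
  have hMonic : R.Monic := (monic_X_pow m).add_of_left hdegXP
  have hRdeg : R.degree = (m : ℕ) := by
    rw [hR, degree_add_eq_left_of_degree_lt hdegXP, degree_X_pow]
  have hRnat : R.natDegree = m := natDegree_eq_of_degree_eq_some hRdeg
  have hRint : ∀ j, 1 ≤ j → j ≤ ℓ - 1 → Ig ℓ b j R = 0 := by
    intro j hj1 hj2
    have h1 : Ig ℓ b j R = Ig ℓ b j ((X : Polynomial ℝ) ^ m) + Ig ℓ b j P :=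
      Ig_add hℓ hb hj1 hj2 _ _
    have h2 : Ig ℓ b j P = -(Ig ℓ b j ((X : Polynomial ℝ) ^ m)) := by
      have hv2 : φ P = -(φ ((X : Polynomial ℝ) ^ m)) := by rw [hP, ← hψP]; exact hv
      have := congrFun hv2 ⟨j - 1, by omega⟩
      simpa [hφ, LinearMap.coe_mk, AddHom.coe_mk, show j - 1 + 1 = j by omega] using this
    rw [h1, h2]; ring
  have hRcond : ∀ j, 1 ≤ j → j ≤ ℓ - 1 →
      IntegrableOn (fun x => R.eval x / Real.sqrt (∏ i ∈ Finset.Icc 1 (2 * ℓ), (x - b i)))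
        (Set.Ioo (b (2 * j)) (b (2 * j + 1))) ∧
      ∫ x in (b (2 * j))..(b (2 * j + 1)),
          R.eval x / Real.sqrt (∏ i ∈ Finset.Icc 1 (2 * ℓ), (x - b i)) = 0 := by
    intro j hj1 hj2
    refine ⟨integrableOn_gap hℓ hb R hj1 hj2, ?_⟩
    show (∫ x in (b (2 * j))..(b (2 * j + 1)), R.eval x / Real.sqrt (Hf ℓ b x)) = 0
    rw [Ig_eq_intervalIntegral hb hj1 hj2 R]
    exact hRint j hj1 hj2
  refine ⟨R, ⟨hMonic, hRnat, hRcond⟩, ?_⟩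
  intro R' ⟨hM', hd', hcond'⟩
  by_cases hRR : R' = R
  · exact hRR
  have hD0 : R' - R ≠ 0 := sub_ne_zero.2 hRR
  have hdd : (R' - R).degree < (m : ℕ) := by
    have h1 : R'.degree = R.degree := by
      rw [Polynomial.degree_eq_natDegree hM'.ne_zero, Polynomial.degree_eq_natDegree hMonic.ne_zero,
        hd', hRnat]
    have := Polynomial.degree_sub_lt h1 hM'.ne_zero (by rw [hM'.leadingCoeff, hMonic.leadingCoeff])
    rwa [Polynomial.degree_eq_natDegree hM'.ne_zero, hd'] at this
  have hintD : ∀ j, 1 ≤ j → j ≤ ℓ - 1 → Ig ℓ b j (R' - R) = 0 := by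
    intro j hj1 hj2
    have hR'0 : Ig ℓ b j R' = 0 := by
      rw [← Ig_eq_intervalIntegral hb hj1 hj2 R']
      exact (hcond' j hj1 hj2).2
    rw [Ig_sub hℓ hb hj1 hj2, hRint j hj1 hj2, hR'0, sub_zero]
  have : R' - R = 0 := eq_zero_of_integrals hℓ hb _ hdd hintD
  exact sub_eq_zero.1 this
  
end ExUR

/-- Existence and uniqueness of the monic real polynomial `R` of degree `ℓ - 1` whose
integrals against `1/√H` over all the gaps of `E` vanish. -/
theorem exists_unique_R (ℓ : ℕ) (hℓ : 1 ≤ ℓ) (b : ℕ → ℝ)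
    (hb : ∀ i, 1 ≤ i → i < 2 * ℓ → b i < b (i + 1)) :
    ∃! R : Polynomial ℝ, R.Monic ∧ R.natDegree = ℓ - 1 ∧
      ∀ j, 1 ≤ j → j ≤ ℓ - 1 →
        IntegrableOn
          (fun x => R.eval x / Real.sqrt (∏ i ∈ Finset.Icc 1 (2 * ℓ), (x - b i)))
          (Set.Ioo (b (2 * j)) (b (2 * j + 1))) ∧
        ∫ x in (b (2 * j))..(b (2 * j + 1)),
          R.eval x / Real.sqrt (∏ i ∈ Finset.Icc 1 (2 * ℓ), (x - b i)) = 0 := by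
  exact ExUR.main ℓ hℓ b hb
end

section
/- With E, H, R as in the context: the polynomial R has ℓ−1 simple real zeros z₁ < z₂ < … < z_{ℓ−1} satisfying b_{2j} < z_j < b_{2j+1} for j = 1, …, ℓ−1 (one zero in each gap of E). Consequently, R has constant sign on each interval of E, namely R(x) = (−1)^{ℓ−j} |R(x)| for every x ∈ [b_{2j−1}, b_{2j}] and every j = 1, …, ℓ. -/
open MeasureTheory Set Polynomial

lemma aux_meas_q (a d : ℝ) :
    Measurable (fun x => 1 / (Real.sqrt (x - a) * Real.sqrt (d - x))) := by
  exact measurable_const.div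
    ((Real.continuous_sqrt.comp (continuous_id.sub continuous_const)).mul
      (Real.continuous_sqrt.comp (continuous_const.sub continuous_id))).measurable

lemma aux_intInt_q (a d : ℝ) (h : a < d) :
    IntervalIntegrable (fun x => 1 / (Real.sqrt (x - a) * Real.sqrt (d - x)))
      volume a d := by
  set mid := (a + d) / 2 with hmid
  have hamid : a < mid := by simp [hmid]; linarith
  have hmidd : mid < d := by simp [hmid]; linarith
  have hq := aux_meas_q a d
  have h1 : IntervalIntegrable (fun x => 1 / (Real.sqrt (x - a) * Real.sqrt (d - x)))
      volume a mid := by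
    have hmaj : IntervalIntegrable
        (fun x => (1 / Real.sqrt (d - mid)) * (x - a) ^ (-(1/2) : ℝ)) volume a mid := by
      have := (intervalIntegral.intervalIntegrable_rpow' (a := 0) (b := mid - a) (r := -(1/2))
        (by norm_num)).comp_sub_right a
      simpa using this.const_mul (1 / Real.sqrt (d - mid))
    refine hmaj.mono_fun' hq.aestronglyMeasurable.restrict ?_
    rw [Filter.EventuallyLE, ae_restrict_iff' measurableSet_uIoc]
    refine Filter.Eventually.of_forall (fun x hx => ?_)
    rw [uIoc_of_le hamid.le] at hx
    have hxa : 0 < x - a := by simp at hx; linarith [hx.1]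
    have hdx : 0 < d - x := by simp at hx; linarith [hx.2, hmidd]
    have hdm : d - mid ≤ d - x := by simp at hx; linarith [hx.2]
    have hs1 : 0 < Real.sqrt (x - a) := Real.sqrt_pos.mpr hxa
    have hs2 : 0 < Real.sqrt (d - x) := Real.sqrt_pos.mpr hdx
    have hs3 : 0 < Real.sqrt (d - mid) := Real.sqrt_pos.mpr (by linarith)
    have hmono : Real.sqrt (d - mid) ≤ Real.sqrt (d - x) := Real.sqrt_le_sqrt hdm
    have hrw : (x - a) ^ (-(1/2) : ℝ) = 1 / Real.sqrt (x - a) := by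
      rw [Real.rpow_neg hxa.le, Real.sqrt_eq_rpow]; norm_num
    simp only [Real.norm_eq_abs]
    rw [abs_of_nonneg (by positivity), hrw]
    rw [div_mul_div_comm, one_mul]
    exact one_div_le_one_div_of_le (by positivity) (by nlinarith)
  have h2 : IntervalIntegrable (fun x => 1 / (Real.sqrt (x - a) * Real.sqrt (d - x)))
      volume mid d := by
    have hmaj : IntervalIntegrable
        (fun x => (1 / Real.sqrt (mid - a)) * (d - x) ^ (-(1/2) : ℝ)) volume mid d := by
      have := (intervalIntegral.intervalIntegrable_rpow' (a := d - mid) (b := 0) (r := -(1/2))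
        (by norm_num)).comp_sub_left d
      simpa using this.const_mul (1 / Real.sqrt (mid - a))
    refine hmaj.mono_fun' hq.aestronglyMeasurable.restrict ?_
    rw [Filter.EventuallyLE, ae_restrict_iff' measurableSet_uIoc]
    refine Filter.Eventually.of_forall (fun x hx => ?_)
    rw [uIoc_of_le hmidd.le] at hx
    simp only [Set.mem_Ioc] at hx
    rcases eq_or_lt_of_le hx.2 with hxd | hxd
    · subst hxd
      simp [Real.sqrt_zero]
    have hxa : 0 < x - a := by linarith [hx.1, hamid]
    have hdx : 0 < d - x := by linarith
    have hma : mid - a ≤ x - a := by linarith [hx.1]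
    have hs1 : 0 < Real.sqrt (x - a) := Real.sqrt_pos.mpr hxa
    have hs2 : 0 < Real.sqrt (d - x) := Real.sqrt_pos.mpr hdx
    have hs3 : 0 < Real.sqrt (mid - a) := Real.sqrt_pos.mpr (by linarith)
    have hmono : Real.sqrt (mid - a) ≤ Real.sqrt (x - a) := Real.sqrt_le_sqrt hma
    have hrw : (d - x) ^ (-(1/2) : ℝ) = 1 / Real.sqrt (d - x) := by
      rw [Real.rpow_neg hdx.le, Real.sqrt_eq_rpow]; norm_num
    simp only [Real.norm_eq_abs]
    rw [abs_of_nonneg (by positivity), hrw]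
    rw [div_mul_div_comm, one_mul]
    exact one_div_le_one_div_of_le (by positivity) (by nlinarith)
  exact h1.trans h2
/-- The polynomial `R` has `ℓ - 1` simple real zeros, one in each gap of `E`;
consequently `R` has constant sign `(-1)^(ℓ-j)` on the `j`-th interval of `E`. -/
theorem zeros_of_R (ℓ : ℕ) (hℓ : 1 ≤ ℓ) (b : ℕ → ℝ)
    (hb : ∀ i, 1 ≤ i → i < 2 * ℓ → b i < b (i + 1))
    (R : Polynomial ℝ) (hmonic : R.Monic) (hdeg : R.natDegree = ℓ - 1)
    (hint : ∀ j, 1 ≤ j → j ≤ ℓ - 1 →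
      ∫ x in (b (2 * j))..(b (2 * j + 1)),
        R.eval x / Real.sqrt (∏ i ∈ Finset.Icc 1 (2 * ℓ), (x - b i)) = 0) :
    ∃ z : ℕ → ℝ,
      (∀ j, 1 ≤ j → j ≤ ℓ - 1 → b (2 * j) < z j ∧ z j < b (2 * j + 1)) ∧
      (∀ j, 1 ≤ j → j + 1 ≤ ℓ - 1 → z j < z (j + 1)) ∧
      R = ∏ j ∈ Finset.Icc 1 (ℓ - 1), (X - C (z j)) ∧
      (∀ j, 1 ≤ j → j ≤ ℓ → ∀ x ∈ Set.Icc (b (2 * j - 1)) (b (2 * j)),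
        R.eval x = (-1 : ℝ) ^ (ℓ - j) * |R.eval x|) := by
  classical
  have hR0 : R ≠ 0 := hmonic.ne_zero
  -- monotonicity of b on [1, 2ℓ]
  have hbmono : ∀ k i, 1 ≤ i → i < k → k ≤ 2 * ℓ → b i < b k := by
    intro k
    induction k with
    | zero => intro i h1 h2 h3; omega
    | succ k ih =>
      intro i h1 h2 h3
      rcases Nat.lt_or_ge i k with h | h
      · exact (ih i h1 h (by omega)).trans (hb k (by omega) (by omega))
      · have hik : i = k := by omega
        subst hik
        exact hb i h1 (by omega)
  have hble : ∀ i k, 1 ≤ i → i ≤ k → k ≤ 2 * ℓ → b i ≤ b k := by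
    intro i k h1 h2 h3
    rcases eq_or_lt_of_le h2 with rfl | h
    · exact le_refl _
    · exact (hbmono k i h1 h h3).le
  -- existence of a root in each gap
  have hroot : ∀ j, 1 ≤ j → j ≤ ℓ - 1 →
      ∃ zj, (b (2 * j) < zj ∧ zj < b (2 * j + 1)) ∧ R.eval zj = 0 := by
    intro j hj1 hj2
    by_contra hcon
    push_neg at hcon
    have had : b (2 * j) < b (2 * j + 1) := hb (2 * j) (by omega) (by omega)
    set a := b (2 * j) with ha
    set d := b (2 * j + 1) with hd
    set s2 : Finset ℕ := ((Finset.Icc 1 (2 * ℓ)).erase (2 * j)).erase (2 * j + 1) with hs2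
    have hsplit : ∀ x : ℝ, (∏ i ∈ Finset.Icc 1 (2 * ℓ), (x - b i))
        = (x - a) * ((x - d) * ∏ i ∈ s2, (x - b i)) := by
      intro x
      rw [← Finset.mul_prod_erase _ _ (show 2 * j ∈ Finset.Icc 1 (2 * ℓ) by
        simp only [Finset.mem_Icc]; omega)]
      rw [← Finset.mul_prod_erase _ _ (show 2 * j + 1 ∈ (Finset.Icc 1 (2 * ℓ)).erase (2 * j) by
        rw [Finset.mem_erase]; refine ⟨by omega, ?_⟩; simp only [Finset.mem_Icc]; omega)]
    have hgneg : ∀ x ∈ Icc a d, (∏ i ∈ s2, (x - b i)) < 0 := by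
      intro x hx
      have hsu : s2 = Finset.Icc 1 (2 * j - 1) ∪ Finset.Icc (2 * j + 2) (2 * ℓ) := by
        ext i
        simp only [hs2, Finset.mem_erase, Finset.mem_Icc, Finset.mem_union]
        omega
      have hdisj : Disjoint (Finset.Icc 1 (2 * j - 1)) (Finset.Icc (2 * j + 2) (2 * ℓ)) := by
        rw [Finset.disjoint_left]
        intro i hi1 hi2
        simp only [Finset.mem_Icc] at hi1 hi2
        omega
      rw [hsu, Finset.prod_union hdisj]
      have hp1 : 0 < ∏ i ∈ Finset.Icc 1 (2 * j - 1), (x - b i) := by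
        refine Finset.prod_pos fun i hi => ?_
        simp only [Finset.mem_Icc] at hi
        have : b i < b (2 * j) := hbmono (2 * j) i hi.1 (by omega) (by omega)
        have := hx.1
        simp only [← ha] at *
        linarith
      have hp2 : (∏ i ∈ Finset.Icc (2 * j + 2) (2 * ℓ), (x - b i)) < 0 := by
        have hodd : Odd (Finset.Icc (2 * j + 2) (2 * ℓ)).card := by
          rw [Nat.card_Icc, Nat.odd_iff]; omega
        have hrw : (∏ i ∈ Finset.Icc (2 * j + 2) (2 * ℓ), (x - b i))
            = (-1 : ℝ) ^ (Finset.Icc (2 * j + 2) (2 * ℓ)).card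
              * ∏ i ∈ Finset.Icc (2 * j + 2) (2 * ℓ), (b i - x) := by
          rw [← Finset.prod_const, ← Finset.prod_mul_distrib]
          exact Finset.prod_congr rfl fun i _ => by ring
        have hpos : 0 < ∏ i ∈ Finset.Icc (2 * j + 2) (2 * ℓ), (b i - x) := by
          refine Finset.prod_pos fun i hi => ?_
          simp only [Finset.mem_Icc] at hi
          have : b (2 * j + 1) < b i := hbmono i (2 * j + 1) (by omega) (by omega) hi.2
          have := hx.2
          simp only [← hd] at *
          linarith
        rw [hrw, hodd.neg_one_pow]
        linarith
      exact mul_neg_of_pos_of_neg hp1 hp2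
    have hgcont : Continuous (fun x : ℝ => ∏ i ∈ s2, (x - b i)) :=
      continuous_finset_prod _ fun i _ => continuous_id.sub continuous_const
    obtain ⟨x0, hx0mem, hx0min⟩ := isCompact_Icc.exists_isMinOn (nonempty_Icc.mpr had.le)
      hgcont.neg.continuousOn
    set m : ℝ := -(∏ i ∈ s2, (x0 - b i)) with hm0
    have hm : 0 < m := by
      have := hgneg x0 hx0mem
      simp only [hm0]; linarith
    have hmle : ∀ x ∈ Icc a d, m ≤ -(∏ i ∈ s2, (x - b i)) := fun x hx =>
      (isMinOn_iff.mp hx0min) x hx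
    obtain ⟨x1, hx1mem, hx1max⟩ := isCompact_Icc.exists_isMaxOn (nonempty_Icc.mpr had.le)
      (continuous_abs.comp (Polynomial.continuous R)).continuousOn
    set M : ℝ := |R.eval x1| with hM0
    have hM : 0 ≤ M := abs_nonneg _
    have hMle : ∀ x ∈ Icc a d, |R.eval x| ≤ M := fun x hx => (isMaxOn_iff.mp hx1max) x hx
    set f : ℝ → ℝ := fun x => R.eval x / Real.sqrt (∏ i ∈ Finset.Icc 1 (2 * ℓ), (x - b i))
      with hf
    have hPkey : ∀ x ∈ Ioo a d, m * ((x - a) * (d - x)) ≤ ∏ i ∈ Finset.Icc 1 (2 * ℓ), (x - b i) := by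
      intro x hx
      rw [hsplit x]
      have h1 : 0 < x - a := by linarith [hx.1]
      have h2 : 0 < d - x := by linarith [hx.2]
      have h3 := hmle x (Ioo_subset_Icc_self hx)
      nlinarith [mul_le_mul_of_nonneg_left h3 h2.le,
        mul_le_mul_of_nonneg_left (mul_le_mul_of_nonneg_left h3 h2.le) h1.le]
    have hPpos : ∀ x ∈ Ioo a d, 0 < ∏ i ∈ Finset.Icc 1 (2 * ℓ), (x - b i) := by
      intro x hx
      have h1 : 0 < x - a := by linarith [hx.1]
      have h2 : 0 < d - x := by linarith [hx.2]
      calc (0:ℝ) < m * ((x - a) * (d - x)) := by positivity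
        _ ≤ _ := hPkey x hx
    have hsqrtle : ∀ x ∈ Ioo a d,
        Real.sqrt m * (Real.sqrt (x - a) * Real.sqrt (d - x))
          ≤ Real.sqrt (∏ i ∈ Finset.Icc 1 (2 * ℓ), (x - b i)) := by
      intro x hx
      have h1 : 0 ≤ x - a := by linarith [hx.1]
      have := Real.sqrt_le_sqrt (hPkey x hx)
      rwa [Real.sqrt_mul hm.le, Real.sqrt_mul h1] at this
    have hfmeas : Measurable f := by
      refine (Polynomial.continuous R).measurable.div ?_
      exact (Real.continuous_sqrt.comp
        (continuous_finset_prod _ fun i _ => continuous_id.sub continuous_const)).measurable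
    have hfint : IntervalIntegrable f volume a d := by
      have hqint := (aux_intInt_q a d had).const_mul (M / Real.sqrt m)
      refine hqint.mono_fun' hfmeas.aestronglyMeasurable.restrict ?_
      rw [Filter.EventuallyLE, ae_restrict_iff' measurableSet_uIoc]
      refine Filter.Eventually.of_forall fun x hx => ?_
      rw [uIoc_of_le had.le] at hx
      rcases eq_or_lt_of_le hx.2 with hxd | hxd
      · have hPd : (∏ i ∈ Finset.Icc 1 (2 * ℓ), (x - b i)) = 0 := by
          rw [hsplit x, hxd]; ring
        have hdx : Real.sqrt (d - x) = 0 := by rw [hxd]; simp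
        simp [hf, hPd, hdx]
      · have hxmem : x ∈ Ioo a d := ⟨hx.1, hxd⟩
        have hP := hPpos x hxmem
        have hsP : 0 < Real.sqrt (∏ i ∈ Finset.Icc 1 (2 * ℓ), (x - b i)) := Real.sqrt_pos.mpr hP
        have h1 : 0 < x - a := by linarith [hx.1]
        have h2 : 0 < d - x := by linarith [hxd]
        have hden : 0 < Real.sqrt m * (Real.sqrt (x - a) * Real.sqrt (d - x)) := by positivity
        have hnorm : ‖f x‖ = |R.eval x| / Real.sqrt (∏ i ∈ Finset.Icc 1 (2 * ℓ), (x - b i)) := by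
          rw [hf]
          simp only [Real.norm_eq_abs, abs_div, abs_of_nonneg (Real.sqrt_nonneg _)]
        rw [hnorm]
        refine le_trans (div_le_div₀ hM (hMle x (Ioo_subset_Icc_self hxmem)) hden
          (hsqrtle x hxmem)) (le_of_eq ?_)
        rw [div_mul_div_comm, mul_one]
    -- sign analysis
    have hne : ∀ x ∈ Ioo a d, R.eval x ≠ 0 := fun x hx => hcon x ⟨hx.1, hx.2⟩
    have hx0'mem : (a + d) / 2 ∈ Ioo a d := ⟨by linarith, by linarith⟩
    have hsame : (∀ x ∈ Ioo a d, 0 < R.eval x) ∨ (∀ x ∈ Ioo a d, R.eval x < 0) := by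
      rcases lt_or_gt_of_ne (hne _ hx0'mem) with hneg | hpos
      · right
        intro y hy
        by_contra hy'
        have hy0 : 0 < R.eval y := lt_of_le_of_ne (not_lt.mp hy') (Ne.symm (hne y hy))
        have hsub : uIcc ((a + d) / 2) y ⊆ Ioo a d :=
          (ordConnected_Ioo).uIcc_subset hx0'mem hy
        obtain ⟨c, hcmem, hc⟩ := intermediate_value_uIcc
          (Polynomial.continuous R).continuousOn
          (show (0:ℝ) ∈ uIcc (R.eval ((a + d) / 2)) (R.eval y) by
            rw [Set.mem_uIcc]; left; exact ⟨hneg.le, hy0.le⟩)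
        exact hne c (hsub hcmem) hc
      · left
        intro y hy
        by_contra hy'
        have hy0 : R.eval y < 0 := lt_of_le_of_ne (not_lt.mp hy') (hne y hy)
        have hsub : uIcc ((a + d) / 2) y ⊆ Ioo a d :=
          (ordConnected_Ioo).uIcc_subset hx0'mem hy
        obtain ⟨c, hcmem, hc⟩ := intermediate_value_uIcc
          (Polynomial.continuous R).continuousOn
          (show (0:ℝ) ∈ uIcc (R.eval ((a + d) / 2)) (R.eval y) by
            rw [Set.mem_uIcc]; right; exact ⟨hy0.le, hpos.le⟩)
        exact hne c (hsub hcmem) hc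
    have hI : (∫ x in a..d, f x) = 0 := by
      simp only [hf, ha, hd]
      exact hint j hj1 hj2
    rcases hsame with hpos | hneg
    · have : 0 < ∫ x in a..d, f x := by
        refine intervalIntegral.intervalIntegral_pos_of_pos_on hfint (fun x hx => ?_) had
        exact div_pos (hpos x hx) (Real.sqrt_pos.mpr (hPpos x hx))
      rw [hI] at this
      exact lt_irrefl 0 this
    · have : 0 < ∫ x in a..d, (-f) x := by
        refine intervalIntegral.intervalIntegral_pos_of_pos_on hfint.neg (fun x hx => ?_) had
        simp only [Pi.neg_apply, hf, Left.nonneg_neg_iff]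
        have : f x < 0 := div_neg_of_neg_of_pos (hneg x hx) (Real.sqrt_pos.mpr (hPpos x hx))
        simpa [hf] using this
      rw [show (∫ x in a..d, (-f) x) = -∫ x in a..d, f x from intervalIntegral.integral_neg,
        hI] at this
      simp at this
  choose! z hz1 hz2 using hroot
  have hzlt : ∀ i k, 1 ≤ i → i < k → k ≤ ℓ - 1 → z i < z k := by
    intro i k h1 h2 h3
    have hi := hz1 i h1 (by omega)
    have hk := hz1 k (by omega) h3
    have hbb : b (2 * i + 1) ≤ b (2 * k) := hble (2 * i + 1) (2 * k) (by omega) (by omega)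
      (by omega)
    linarith [hi.2, hk.1]
  have hfact : R = ∏ j ∈ Finset.Icc 1 (ℓ - 1), (X - C (z j)) := by
    have hinj : ∀ i ∈ (Finset.Icc 1 (ℓ - 1)).val, ∀ k ∈ (Finset.Icc 1 (ℓ - 1)).val,
        z i = z k → i = k := by
      intro i hi k hk he
      rw [Finset.mem_val, Finset.mem_Icc] at hi hk
      by_contra hne
      rcases Nat.lt_or_ge i k with h | h
      · exact absurd he (ne_of_lt (hzlt i k hi.1 h hk.2))
      · exact absurd he.symm (ne_of_lt (hzlt k i hk.1 (by omega) hi.2))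
    have hnd : ((Finset.Icc 1 (ℓ - 1)).val.map z).Nodup :=
      Multiset.Nodup.map_on hinj (Finset.Icc 1 (ℓ - 1)).nodup
    have hsubr : ((Finset.Icc 1 (ℓ - 1)).val.map z) ≤ R.roots := by
      rw [Multiset.le_iff_subset hnd]
      intro r hr
      obtain ⟨i, hi, rfl⟩ := Multiset.mem_map.mp hr
      rw [Finset.mem_val, Finset.mem_Icc] at hi
      rw [Polynomial.mem_roots hR0]
      exact hz2 i hi.1 hi.2
    have hdvd : (∏ j ∈ Finset.Icc 1 (ℓ - 1), (X - C (z j))) ∣ R := by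
      have h1 := (Multiset.prod_X_sub_C_dvd_iff_le_roots hR0 _).mpr hsubr
      have h2 : (∏ j ∈ Finset.Icc 1 (ℓ - 1), (X - C (z j)))
          = (((Finset.Icc 1 (ℓ - 1)).val.map z).map fun r => X - C r).prod := by
        rw [Multiset.map_map, Finset.prod_eq_multiset_prod]
        rfl
      rw [h2]
      exact h1
    obtain ⟨q, hqe⟩ := hdvd
    have hPzmonic : (∏ j ∈ Finset.Icc 1 (ℓ - 1), (X - C (z j))).Monic :=
      Polynomial.monic_prod_of_monic _ _ fun i _ => Polynomial.monic_X_sub_C _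
    have hPzdeg : (∏ j ∈ Finset.Icc 1 (ℓ - 1), (X - C (z j))).natDegree = ℓ - 1 := by
      rw [Polynomial.natDegree_prod _ _ fun i _ => Polynomial.X_sub_C_ne_zero _]
      simp [Polynomial.natDegree_X_sub_C, Nat.card_Icc]
    have hq0 : q ≠ 0 := by
      rintro rfl
      rw [mul_zero] at hqe
      exact hR0 hqe
    have hqdeg : q.natDegree = 0 := by
      have hnd := Polynomial.natDegree_mul hPzmonic.ne_zero hq0
      rw [← hqe, hdeg, hPzdeg] at hnd
      omega
    have hqmonic : q.Monic := by
      have hlc := Polynomial.leadingCoeff_mul (∏ j ∈ Finset.Icc 1 (ℓ - 1), (X - C (z j))) q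
      rw [← hqe, hmonic.leadingCoeff, hPzmonic.leadingCoeff, one_mul] at hlc
      exact hlc.symm
    rw [hqe, hqmonic.natDegree_eq_zero.mp hqdeg, mul_one]
  refine ⟨z, fun j h1 h2 => hz1 j h1 h2, fun j h1 h2 => hzlt j (j + 1) h1 (by omega) h2,
    hfact, ?_⟩
  intro j hj1 hjl x hx
  have hxlb : b (2 * j - 1) ≤ x := hx.1
  have hxub : x ≤ b (2 * j) := hx.2
  have hev : R.eval x = ∏ i ∈ Finset.Icc 1 (ℓ - 1), (x - z i) := by
    rw [hfact]
    simp [Polynomial.eval_prod]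
  have hsplit2 : Finset.Icc 1 (ℓ - 1) = Finset.Icc 1 (j - 1) ∪ Finset.Icc j (ℓ - 1) := by
    ext i
    simp only [Finset.mem_Icc, Finset.mem_union]
    omega
  have hdisj2 : Disjoint (Finset.Icc 1 (j - 1)) (Finset.Icc j (ℓ - 1)) := by
    rw [Finset.disjoint_left]
    intro i h1 h2
    simp only [Finset.mem_Icc] at h1 h2
    omega
  have hp1 : 0 < ∏ i ∈ Finset.Icc 1 (j - 1), (x - z i) := by
    refine Finset.prod_pos fun i hi => ?_
    simp only [Finset.mem_Icc] at hi
    have hzi := (hz1 i hi.1 (by omega)).2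
    have hbb : b (2 * i + 1) ≤ b (2 * j - 1) := hble _ _ (by omega) (by omega) (by omega)
    linarith
  have hp2pos : 0 < ∏ i ∈ Finset.Icc j (ℓ - 1), (z i - x) := by
    refine Finset.prod_pos fun i hi => ?_
    simp only [Finset.mem_Icc] at hi
    have hzi := (hz1 i (by omega) hi.2).1
    have hbb : b (2 * j) ≤ b (2 * i) := hble _ _ (by omega) (by omega) (by omega)
    linarith
  have hcard : (Finset.Icc j (ℓ - 1)).card = ℓ - j := by
    rw [Nat.card_Icc]
    omega
  have hp2 : (∏ i ∈ Finset.Icc j (ℓ - 1), (x - z i))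
      = (-1 : ℝ) ^ (ℓ - j) * ∏ i ∈ Finset.Icc j (ℓ - 1), (z i - x) := by
    rw [← hcard, ← Finset.prod_const, ← Finset.prod_mul_distrib]
    exact Finset.prod_congr rfl fun i _ => by ring
  have heq : R.eval x = (-1 : ℝ) ^ (ℓ - j)
      * ((∏ i ∈ Finset.Icc 1 (j - 1), (x - z i)) * ∏ i ∈ Finset.Icc j (ℓ - 1), (z i - x)) := by
    rw [hev, hsplit2, Finset.prod_union hdisj2, hp2]
    ring
  rw [heq, abs_mul, abs_pow, abs_neg, abs_one, one_pow, one_mul,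
    abs_of_pos (mul_pos hp1 hp2pos)]
end

section
/- Let ℓ ≥ 1, let a₁ < a₂ < … < a_ℓ be real numbers, let m₁, …, m_ℓ > 0 with Σ_{j=1}^ℓ m_j = 1, and let c > 0. Define F₁(w) = Σ_{j=1}^ℓ m_j Log(w − a_j) − log c for w ∈ ℂ ∖ ℝ, where Log is the principal branch of the complex logarithm and log c is the real logarithm. Then: (a) for every w with Im(w) > 0, one has 0 < Im(F₁(w)) < π, and for every w with Im(w) < 0, one has −π < Im(F₁(w)) < 0; (b) F₁ is injective on {w ∈ ℂ : Im(w) ≠ 0}. -/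
open Complex Set

/-- Injectivity of the log-sum on the upper half plane, via the
Noshiro–Warschawski argument along the segment joining the two points. -/
lemma cgi_aux_upper (ℓ : ℕ) (hℓ : 1 ≤ ℓ) (a m : ℕ → ℝ)
    (hm : ∀ j ∈ Finset.Icc 1 ℓ, 0 < m j)
    (w₁ w₂ : ℂ) (h1 : 0 < w₁.im) (h2 : 0 < w₂.im)
    (heq : ∑ j ∈ Finset.Icc 1 ℓ, (m j : ℂ) * Complex.log (w₁ - (a j : ℂ))
         = ∑ j ∈ Finset.Icc 1 ℓ, (m j : ℂ) * Complex.log (w₂ - (a j : ℂ))) :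
    w₁ = w₂ := by
  by_contra hne
  have hDne : w₁ - w₂ ≠ 0 := sub_ne_zero.2 hne
  set S := Finset.Icc 1 ℓ with hS
  have hSne : S.Nonempty := Finset.nonempty_Icc.2 hℓ
  set γ : ℝ → ℂ := fun t => w₂ + (t : ℂ) * (w₁ - w₂) with hγ
  set d : ℂ → ℂ := fun z => ∑ j ∈ S, (m j : ℂ) * (z - (a j : ℂ))⁻¹ with hd
  set G : ℂ → ℂ := fun w => ∑ j ∈ S, (m j : ℂ) * Complex.log (w - (a j : ℂ)) with hG
  -- the segment stays in the upper half plane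
  have hγim : ∀ t ∈ Set.Icc (0 : ℝ) 1, 0 < (γ t).im := by
    intro t ht
    have h : (γ t).im = w₂.im + t * (w₁.im - w₂.im) := by
      simp [hγ, Complex.add_im, Complex.mul_im]
    rw [h]
    rcases eq_or_lt_of_le ht.1 with h0 | h0
    · rw [← h0]; simpa using h2
    · nlinarith [mul_pos h0 h1, mul_nonneg (sub_nonneg.2 ht.2) h2.le]
  have hne0 : ∀ t ∈ Set.Icc (0 : ℝ) 1, ∀ j, γ t - (a j : ℂ) ≠ 0 := by
    intro t ht j h
    have him : (γ t - (a j : ℂ)).im = (γ t).im := by simp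
    rw [h] at him
    have := hγim t ht
    simp at him
    linarith [him ▸ this]
  have hslit : ∀ t ∈ Set.Icc (0 : ℝ) 1, ∀ j, γ t - (a j : ℂ) ∈ slitPlane := by
    intro t ht j
    rw [Complex.mem_slitPlane_iff]
    right
    have : (γ t - (a j : ℂ)).im = (γ t).im := by simp
    rw [this]
    exact (hγim t ht).ne'
  -- continuity of the integrand
  have hγcont : Continuous γ := by
    apply Continuous.add continuous_const
    exact (Complex.continuous_ofReal).mul continuous_const
  have hdcont : ContinuousOn (fun t => d (γ t)) (Set.uIcc (0 : ℝ) 1) := by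
    rw [Set.uIcc_of_le (zero_le_one)]
    apply continuousOn_finset_sum
    intro j _
    apply ContinuousOn.mul continuousOn_const
    apply ContinuousOn.inv₀
    · exact ((hγcont.continuousOn).sub continuousOn_const)
    · intro t ht
      exact hne0 t ht j
  -- derivative along the segment
  have hderiv : ∀ t ∈ Set.uIcc (0 : ℝ) 1,
      HasDerivAt (fun s : ℝ => G (γ s)) ((w₁ - w₂) * d (γ t)) t := by
    intro t ht
    rw [Set.uIcc_of_le (zero_le_one)] at ht
    have hγ' : HasDerivAt γ (w₁ - w₂) t := by
      have h1 : HasDerivAt (fun s : ℝ => (s : ℂ)) 1 t := by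
        exact Complex.ofRealCLM.hasDerivAt (x := t)
      have := (h1.mul_const (w₁ - w₂)).const_add w₂
      rw [one_mul] at this
      exact this
    have hGz : HasDerivAt G (d (γ t)) (γ t) := by
      apply HasDerivAt.fun_sum
      intro j hj
      have hlog : HasDerivAt Complex.log (γ t - (a j : ℂ))⁻¹ (γ t - (a j : ℂ)) :=
        Complex.hasDerivAt_log (hslit t ht j)
      have hsub : HasDerivAt (fun w : ℂ => w - (a j : ℂ)) 1 (γ t) :=
        (hasDerivAt_id (γ t)).sub_const _
      simpa using (hlog.comp (γ t) hsub).const_mul ((m j : ℂ))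
    have := (hGz.hasFDerivAt.restrictScalars ℝ).comp_hasDerivAt t hγ'
    convert this using 1
    · rfl
    · rfl
    · simp [mul_comm]
  -- fundamental theorem of calculus
  have hint : IntervalIntegrable (fun t => (w₁ - w₂) * d (γ t)) MeasureTheory.volume 0 1 :=
    (continuousOn_const.mul hdcont).intervalIntegrable
  have hftc : ∫ t in (0:ℝ)..1, (w₁ - w₂) * d (γ t) = G (γ 1) - G (γ 0) :=
    intervalIntegral.integral_eq_sub_of_hasDerivAt hderiv hint
  have hγ1 : γ 1 = w₁ := by simp [hγ]
  have hγ0 : γ 0 = w₂ := by simp [hγ]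
  rw [hγ1, hγ0] at hftc
  have hzero : G w₁ - G w₂ = 0 := by
    rw [hG]; simp only [hS] at heq ⊢; rw [heq]; ring
  rw [hzero, intervalIntegral.integral_const_mul] at hftc
  have hI : ∫ t in (0:ℝ)..1, d (γ t) = 0 := by
    rcases mul_eq_zero.1 hftc with h | h
    · exact absurd h hDne
    · exact h
  -- take imaginary parts
  have hdint : IntervalIntegrable (fun t => d (γ t)) MeasureTheory.volume 0 1 :=
    hdcont.intervalIntegrable
  have him : ∫ t in (0:ℝ)..1, (d (γ t)).im = 0 := by
    have := Complex.imCLM.intervalIntegral_comp_comm hdint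
    simp only [Complex.imCLM_apply] at this
    rw [this, hI]
    simp
  -- the imaginary part of the integrand is strictly negative
  have hneg : ∀ t ∈ Set.Icc (0 : ℝ) 1, 0 < -(d (γ t)).im := by
    intro t ht
    have hform : -(d (γ t)).im
        = ∑ j ∈ S, m j * ((γ t).im / Complex.normSq (γ t - (a j : ℂ))) := by
      rw [hd]
      simp only [Complex.im_sum]
      rw [← Finset.sum_neg_distrib]
      apply Finset.sum_congr rfl
      intro j hj
      rw [Complex.mul_im, Complex.ofReal_re, Complex.ofReal_im, Complex.inv_im]
      have h : (γ t - (a j : ℂ)).im = (γ t).im := by simp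
      rw [h]
      ring
    rw [hform]
    apply Finset.sum_pos _ hSne
    intro j hj
    apply mul_pos (hm j hj)
    apply div_pos (hγim t ht)
    exact Complex.normSq_pos.2 (hne0 t ht j)
  have hcontim : ContinuousOn (fun t => -(d (γ t)).im) (Set.uIcc (0 : ℝ) 1) :=
    (Complex.continuous_im.comp_continuousOn hdcont).neg
  have hpos : 0 < ∫ t in (0:ℝ)..1, -(d (γ t)).im := by
    apply intervalIntegral.intervalIntegral_pos_of_pos_on
    · exact hcontim.intervalIntegrable
    · intro t ht
      exact hneg t ⟨ht.1.le, ht.2.le⟩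
    · exact one_pos
  rw [intervalIntegral.integral_neg, him] at hpos
  simp at hpos

/-- The complex Green's function `F₁` of the complement of a lemniscatic set with real
centers maps each open half-plane into the corresponding horizontal strip of height `π`,
and is injective off the real axis. -/
theorem complex_green_injective (ℓ : ℕ) (hℓ : 1 ≤ ℓ)
    (a : ℕ → ℝ) (ha : ∀ j, 1 ≤ j → j < ℓ → a j < a (j + 1))
    (m : ℕ → ℝ) (hm : ∀ j, 1 ≤ j → j ≤ ℓ → 0 < m j)
    (hsum : ∑ j ∈ Finset.Icc 1 ℓ, m j = 1)
    (c : ℝ) (hc : 0 < c)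
    (F₁ : ℂ → ℂ)
    (hF₁ : ∀ w, F₁ w = ∑ j ∈ Finset.Icc 1 ℓ, (m j : ℂ) * Complex.log (w - (a j : ℂ))
      - ((Real.log c : ℝ) : ℂ)) :
    (∀ w : ℂ, 0 < w.im → 0 < (F₁ w).im ∧ (F₁ w).im < Real.pi) ∧
    (∀ w : ℂ, w.im < 0 → -Real.pi < (F₁ w).im ∧ (F₁ w).im < 0) ∧
    Set.InjOn F₁ {w : ℂ | w.im ≠ 0} := by
  set S := Finset.Icc 1 ℓ with hS
  have hSne : S.Nonempty := Finset.nonempty_Icc.2 hℓ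
  have hm' : ∀ j ∈ S, 0 < m j := by
    intro j hj
    rw [hS, Finset.mem_Icc] at hj
    exact hm j hj.1 hj.2
  -- imaginary part formula
  have himF : ∀ w : ℂ, (F₁ w).im = ∑ j ∈ S, m j * (w - (a j : ℂ)).arg := by
    intro w
    rw [hF₁, Complex.sub_im, Complex.ofReal_im, sub_zero, Complex.im_sum]
    apply Finset.sum_congr rfl
    intro j _
    rw [Complex.mul_im, Complex.ofReal_re, Complex.ofReal_im, Complex.log_im,
      Complex.log_re]
    ring
  have hargim : ∀ (w : ℂ) (j : ℕ), (w - (a j : ℂ)).im = w.im := by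
    intro w j; simp
  -- part (a), upper half plane
  have hup : ∀ w : ℂ, 0 < w.im → 0 < (F₁ w).im ∧ (F₁ w).im < Real.pi := by
    intro w hw
    constructor
    · rw [himF]
      apply Finset.sum_pos _ hSne
      intro j hj
      apply mul_pos (hm' j hj)
      have hiw : (w - (a j : ℂ)).im > 0 := by rw [hargim]; exact hw
      have hnn : 0 ≤ (w - (a j : ℂ)).arg := by
        by_contra h
        push_neg at h
        have := Complex.arg_neg_iff.1 h
        linarith
      rcases hnn.lt_or_eq with h | h
      · exact h
      · exfalso
        have := (Complex.arg_eq_zero_iff.1 h.symm).2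
        linarith
    · rw [himF]
      have hlt : ∑ j ∈ S, m j * (w - (a j : ℂ)).arg < ∑ j ∈ S, m j * Real.pi := by
        apply Finset.sum_lt_sum_of_nonempty hSne
        intro j hj
        apply mul_lt_mul_of_pos_left _ (hm' j hj)
        rcases (Complex.arg_le_pi (w - (a j : ℂ))).lt_or_eq with h | h
        · exact h
        · exfalso
          have := (Complex.arg_eq_pi_iff.1 h).2
          rw [hargim] at this
          linarith
      calc ∑ j ∈ S, m j * (w - (a j : ℂ)).arg < ∑ j ∈ S, m j * Real.pi := hlt
        _ = Real.pi := by rw [← Finset.sum_mul, hS, hsum, one_mul]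
  -- part (a), lower half plane
  have hdown : ∀ w : ℂ, w.im < 0 → -Real.pi < (F₁ w).im ∧ (F₁ w).im < 0 := by
    intro w hw
    constructor
    · rw [himF]
      have hlt : ∑ j ∈ S, m j * (-Real.pi) < ∑ j ∈ S, m j * (w - (a j : ℂ)).arg := by
        apply Finset.sum_lt_sum_of_nonempty hSne
        intro j hj
        exact mul_lt_mul_of_pos_left (Complex.neg_pi_lt_arg _) (hm' j hj)
      calc -Real.pi = ∑ j ∈ S, m j * (-Real.pi) := by
            rw [← Finset.sum_mul, hS, hsum, one_mul]
        _ < _ := hlt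
    · rw [himF]
      apply Finset.sum_neg _ hSne
      intro j hj
      have harg : (w - (a j : ℂ)).arg < 0 := by
        apply Complex.arg_neg_iff.2
        rw [hargim]
        exact hw
      exact mul_neg_of_pos_of_neg (hm' j hj) harg
  refine ⟨hup, hdown, ?_⟩
  -- injectivity
  -- conjugation identity
  have hconj : ∀ w : ℂ, w.im ≠ 0 →
      ∑ j ∈ S, (m j : ℂ) * Complex.log ((starRingEnd ℂ) w - (a j : ℂ))
        = (starRingEnd ℂ) (∑ j ∈ S, (m j : ℂ) * Complex.log (w - (a j : ℂ))) := by
    intro w hw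
    rw [map_sum]
    apply Finset.sum_congr rfl
    intro j _
    rw [map_mul, Complex.conj_ofReal]
    congr 1
    rw [← Complex.log_conj]
    · congr 1
      rw [map_sub, Complex.conj_ofReal]
    · intro h
      have := (Complex.arg_eq_pi_iff.1 h).2
      rw [hargim] at this
      exact hw this
  intro w₁ h₁ w₂ h₂ heq
  simp only [Set.mem_setOf_eq] at h₁ h₂
  have hGeq : ∑ j ∈ S, (m j : ℂ) * Complex.log (w₁ - (a j : ℂ))
      = ∑ j ∈ S, (m j : ℂ) * Complex.log (w₂ - (a j : ℂ)) := by
    have := heq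
    rw [hF₁, hF₁] at this
    exact sub_left_inj.1 this
  rcases h₁.lt_or_gt with hn1 | hp1 <;> rcases h₂.lt_or_gt with hn2 | hp2
  · -- both lower: conjugate
    have hc1 : 0 < ((starRingEnd ℂ) w₁).im := by
      rw [Complex.conj_im]; linarith
    have hc2 : 0 < ((starRingEnd ℂ) w₂).im := by
      rw [Complex.conj_im]; linarith
    have : (starRingEnd ℂ) w₁ = (starRingEnd ℂ) w₂ := by
      apply cgi_aux_upper ℓ hℓ a m hm' _ _ hc1 hc2
      rw [hS] at *
      rw [hconj w₁ h₁, hconj w₂ h₂, hGeq]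
    exact (starRingEnd ℂ).injective this
  · -- mixed
    exfalso
    have ha1 := (hdown w₁ hn1).2
    have ha2 := (hup w₂ hp2).1
    rw [heq] at ha1
    linarith
  · -- mixed
    exfalso
    have ha1 := (hup w₁ hp1).1
    have ha2 := (hdown w₂ hn2).2
    rw [heq] at ha1
    linarith
  · -- both upper
    exact cgi_aux_upper ℓ hℓ a m hm' w₁ w₂ hp1 hp2 hGeq
end
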